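/- arXiv:2411.06301 — 6 statements merged into one kernel-verified Lean document; each statement's English description precedes it below -/
import Mathlib

section
/- Let f : (0,∞) → (0,∞] be the probability generating function of a nonnegative integer random variable X with E[X] < 1 and P[X ≥ 2] > 0, and suppose f is continuous (with (0,∞] given the half-open interval topology). Then there exists a unique q > 1 with f(q) = q. -/
open ENNReal

open scoped Topology

set_option maxHeartbeats 1000000

noncomputable def ppgfPhi (p : ℕ → ℝ≥0∞) (s : ℝ≥0∞) : ℝ≥0∞ :=
  ∑' m, p m * ∑ k ∈ Finset.range m, s ^ k

lemma ppgf_geom_aux (s : ℝ≥0∞) (hs : 1 ≤ s) (m : ℕ) :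
    (s - 1) * ∑ k ∈ Finset.range m, s ^ k + 1 = s ^ m := by
  induction m with
  | zero => simp
  | succ n ih =>
    rw [Finset.sum_range_succ, mul_add, add_right_comm, ih, pow_succ]
    calc s ^ n + (s - 1) * s ^ n = (1 + (s - 1)) * s ^ n := by rw [add_mul, one_mul]
      _ = s * s ^ n := by rw [add_comm, tsub_add_cancel_of_le hs]
      _ = s ^ n * s := mul_comm _ _

lemma ppgf_key (p : ℕ → ℝ≥0∞) (hprob : ∑' m, p m = 1) {s : ℝ≥0∞} (hs : 1 ≤ s) :
    ∑' m, p m * s ^ m = (s - 1) * ppgfPhi p s + 1 := by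
  have h : ∀ m : ℕ, p m * s ^ m
      = (s - 1) * (p m * ∑ k ∈ Finset.range m, s ^ k) + p m := by
    intro m
    rw [← ppgf_geom_aux s hs m, mul_add, mul_one, mul_left_comm]
  simp_rw [h]
  rw [ENNReal.tsum_add, ENNReal.tsum_mul_left, hprob]
  rfl

lemma ppgfPhi_mono (p : ℕ → ℝ≥0∞) : Monotone (ppgfPhi p) := by
  intro x y h
  refine ENNReal.tsum_le_tsum fun m => mul_le_mul_right ?_ _
  exact Finset.sum_le_sum fun k _ => pow_le_pow_left' h k

lemma ppgfPhi_one (p : ℕ → ℝ≥0∞) : ppgfPhi p 1 = ∑' m : ℕ, (m : ℝ≥0∞) * p m := by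
  simp [ppgfPhi, mul_comm]

lemma ppgfPhi_strict (p : ℕ → ℝ≥0∞) {m₀ : ℕ} (hm : 2 ≤ m₀) (hp0 : p m₀ ≠ 0)
    (hpt : p m₀ ≠ ∞) {x y : ℝ≥0∞} (hxy : x < y) (hx : ppgfPhi p x ≠ ∞) :
    ppgfPhi p x < ppgfPhi p y := by
  have hA : ∑ k ∈ Finset.range m₀, x ^ k ≠ ∞ := by
    intro h
    apply hx
    have hle : p m₀ * ∑ k ∈ Finset.range m₀, x ^ k ≤ ppgfPhi p x := ENNReal.le_tsum m₀
    rw [h, ENNReal.mul_top hp0] at hle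
    exact top_le_iff.mp hle
  refine ENNReal.tsum_lt_tsum (i := m₀) hx
    (fun m => mul_le_mul_right (Finset.sum_le_sum fun k _ => pow_le_pow_left' hxy.le k) _) ?_
  refine ENNReal.mul_lt_mul_right hp0 hpt ?_
  have h1mem : (1 : ℕ) ∈ Finset.range m₀ := Finset.mem_range.2 (by omega)
  rw [← Finset.add_sum_erase _ (fun k => x ^ k) h1mem,
    ← Finset.add_sum_erase _ (fun k => y ^ k) h1mem]
  refine ENNReal.add_lt_add_of_lt_of_le ?_ ?_ ?_
  · exact ne_top_of_le_ne_top hA (Finset.sum_le_sum_of_subset (Finset.erase_subset _ _))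
  · simpa using hxy
  · exact Finset.sum_le_sum fun k _ => pow_le_pow_left' hxy.le k


lemma ppgfPhi_lb (p : ℕ → ℝ≥0∞) {m₀ : ℕ} (hm : 2 ≤ m₀) (s : ℝ≥0∞) :
    p m₀ * s ≤ ppgfPhi p s := by
  rw [ppgfPhi]
  refine le_trans ?_ (ENNReal.le_tsum m₀)
  refine mul_le_mul_right ?_ _
  calc s = s ^ 1 := (pow_one s).symm
    _ ≤ ∑ k ∈ Finset.range m₀, s ^ k :=
      Finset.single_le_sum (fun k _ => zero_le') (Finset.mem_range.2 (by omega))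

lemma ppgfPhi_split (p : ℕ → ℝ≥0∞) (s : ℝ≥0∞) (N : ℕ) :
    ppgfPhi p s = (∑ m ∈ Finset.range N, p m * ∑ k ∈ Finset.range m, s ^ k)
      + ∑' k : ℕ, p (k + N) * ∑ j ∈ Finset.range (k + N), s ^ j := by
  rw [ppgfPhi]
  exact (Summable.sum_add_tsum_nat_add' (f := fun m => p m * ∑ k ∈ Finset.range m, s ^ k)
    (k := N) ENNReal.summable).symm

/-- Let `f` be the probability generating function of an `ℕ`-valued
random variable with distribution `p`, mean `< 1` and `P[X ≥ 2] > 0`, and suppose `f`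
is continuous on `(0,∞)` (with values in `(0,∞]`, which carries the subspace topology
of `ℝ≥0∞`). Then there is a unique `q > 1` (in `(0,∞)`) with `f q = q`. -/
theorem exists_unique_fixed_point_single_type
    (p : ℕ → ℝ≥0∞) (f : ℝ≥0∞ → ℝ≥0∞)
    (hf : ∀ s, f s = ∑' m, p m * s ^ m)
    (hprob : ∑' m, p m = 1)
    (hmean : ∑' m : ℕ, (m : ℝ≥0∞) * p m < 1)
    (h2 : ∃ m, 2 ≤ m ∧ 0 < p m)
    (hcont : ContinuousOn f {s : ℝ≥0∞ | 0 < s ∧ s ≠ ⊤}) :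
    ∃! q : ℝ≥0∞, 1 < q ∧ q ≠ ⊤ ∧ f q = q := by
  classical
  obtain ⟨m₀, hm₀2, hm₀p⟩ := h2
  set μ := ∑' m : ℕ, (m : ℝ≥0∞) * p m with hμdef
  have hple : ∀ m, p m ≤ 1 := fun m => hprob ▸ ENNReal.le_tsum m
  have hm₀top : p m₀ ≠ ∞ := (lt_of_le_of_lt (hple m₀) one_lt_top).ne
  have key : ∀ s : ℝ≥0∞, 1 ≤ s → f s = (s - 1) * ppgfPhi p s + 1 := by
    intro s hs; rw [hf]; exact ppgf_key p hprob hs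
  -- φ is at least `p m₀ * s` for every `s` (the `m₀` term, `k = 1`)
  have hφ_lb : ∀ s : ℝ≥0∞, p m₀ * s ≤ ppgfPhi p s := fun s => ppgfPhi_lb p hm₀2 s
  have hφpos : ∀ s : ℝ≥0∞, 1 ≤ s → ppgfPhi p s ≠ 0 := by
    intro s hs h0
    have := hφ_lb s
    rw [h0, le_zero_iff, mul_eq_zero] at this
    rcases this with h | h
    · exact hm₀p.ne' h
    · exact (one_pos.trans_le hs).ne' (by simpa using h)
  have hdom : Set.Ioo (1 : ℝ≥0∞) 2 ⊆ {s : ℝ≥0∞ | 0 < s ∧ s ≠ ⊤} := by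
    intro s hs
    exact ⟨zero_lt_one.trans hs.1, (hs.2.trans (by norm_num)).ne⟩
  have h1mem : (1 : ℝ≥0∞) ∈ {s : ℝ≥0∞ | 0 < s ∧ s ≠ ⊤} := ⟨zero_lt_one, one_ne_top⟩
  have hf1 : f 1 = 1 := by
    rw [key 1 le_rfl]; simp
  -- the filter of points just to the right of 1
  set l : Filter ℝ≥0∞ := 𝓝[Set.Ioo (1 : ℝ≥0∞) 2] 1 with hldef
  have hlne : l.NeBot := left_nhdsWithin_Ioo_neBot (by norm_num)
  have hlle : l ≤ 𝓝[{s : ℝ≥0∞ | 0 < s ∧ s ≠ ⊤}] 1 := nhdsWithin_mono _ hdom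
  have hlle' : l ≤ 𝓝 (1 : ℝ≥0∞) := nhdsWithin_le_nhds
  -- f is finite just to the right of 1
  have hev : ∀ᶠ s in l, f s < 2 := by
    have h := hcont 1 h1mem
    rw [ContinuousWithinAt, hf1] at h
    exact (h.mono_left hlle).eventually_lt_const (by norm_num)
  have hmemIoo : ∀ᶠ s in l, s ∈ Set.Ioo (1 : ℝ≥0∞) 2 := self_mem_nhdsWithin
  obtain ⟨s₂, hs₂f, hs₂⟩ := (hev.and hmemIoo).exists
  have hs₂1 : 1 < s₂ := hs₂.1
  have hs₂top : s₂ ≠ ∞ := (hs₂.2.trans (by norm_num)).ne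
  have hs₂sub0 : s₂ - 1 ≠ 0 := by
    simpa [tsub_eq_zero_iff_le] using hs₂1.not_ge
  have hφs₂ : ppgfPhi p s₂ ≠ ∞ := by
    intro h
    have := key s₂ hs₂1.le
    rw [h, ENNReal.mul_top hs₂sub0, top_add] at this
    exact (this ▸ hs₂f).ne_top rfl
  -- δ = (1 - μ)/3
  set δ : ℝ≥0∞ := (1 - μ) / 3 with hδdef
  have hμtop : μ ≠ ∞ := hmean.ne_top
  have hδ0 : δ ≠ 0 := by
    rw [hδdef, Ne, ENNReal.div_eq_zero_iff]
    simp [tsub_eq_zero_iff_le, hmean.not_ge]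
  have hδtop : δ ≠ ∞ := by
    rw [hδdef]
    exact (ENNReal.div_lt_top (by simp [tsub_le_self, (tsub_le_self.trans_lt one_lt_top)]) (by norm_num)).ne
  -- tail of the series for ppgfPhi p s₂ is eventually small
  set g : ℕ → ℝ≥0∞ := fun m => p m * ∑ k ∈ Finset.range m, s₂ ^ k with hgdef
  have hgsum : ∑' m, g m ≠ ∞ := hφs₂
  obtain ⟨N, hN⟩ := ((ENNReal.tendsto_sum_nat_add g hgsum).eventually_lt_const
    (pos_iff_ne_zero.2 hδ0)).exists
  -- the finite part is continuous
  set F : ℝ≥0∞ → ℝ≥0∞ := fun s => ∑ m ∈ Finset.range N, p m * ∑ k ∈ Finset.range m, s ^ k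
    with hFdef
  have hFcont : Continuous F := by
    refine continuous_finset_sum _ fun m _ => ?_
    exact (ENNReal.continuous_const_mul ((lt_of_le_of_lt (hple m) one_lt_top).ne)).comp
      (continuous_finset_sum _ fun k _ => ENNReal.continuous_pow k)
  have hF1 : F 1 ≤ μ := by
    rw [hFdef, hμdef]
    calc ∑ m ∈ Finset.range N, p m * ∑ k ∈ Finset.range m, (1 : ℝ≥0∞) ^ k
        = ∑ m ∈ Finset.range N, (m : ℝ≥0∞) * p m := by
          refine Finset.sum_congr rfl fun m _ => ?_
          simp [mul_comm]
      _ ≤ ∑' m : ℕ, (m : ℝ≥0∞) * p m := ENNReal.sum_le_tsum _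
  have hF1top : F 1 ≠ ∞ := (hF1.trans_lt hmean).ne_top
  have hevF : ∀ᶠ s in l, F s < F 1 + δ :=
    ((hFcont.tendsto 1).eventually_lt_const (ENNReal.lt_add_right hF1top hδ0)).filter_mono hlle'
  have hevlt : ∀ᶠ s in l, s < s₂ := hlle' (Iio_mem_nhds hs₂1)
  obtain ⟨a, ⟨hFa, has₂⟩, ha⟩ := ((hevF.and hevlt).and hmemIoo).exists
  have ha1 : 1 < a := ha.1
  -- bound ppgfPhi p a
  have hφa : ppgfPhi p a < 1 := by
    have hsplit := ppgfPhi_split p a N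
    have htail : ∑' k : ℕ, p (k + N) * ∑ j ∈ Finset.range (k + N), a ^ j
        ≤ ∑' k, g (k + N) := by
      refine ENNReal.tsum_le_tsum fun k => mul_le_mul_right ?_ _
      exact Finset.sum_le_sum fun j _ => pow_le_pow_left' has₂.le j
    have h1 : ppgfPhi p a ≤ F a + ∑' k, g (k + N) := by
      rw [hsplit]; exact add_le_add le_rfl htail
    have h2 : ppgfPhi p a ≤ μ + δ + δ :=
      h1.trans (add_le_add ((hFa.le).trans (add_le_add hF1 le_rfl)) hN.le)
    refine h2.trans_lt ?_
    have h3δ : δ + δ + δ = (1 - μ) := by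
      rw [hδdef]
      rw [show (1 - μ) / 3 + (1 - μ) / 3 + (1 - μ) / 3 = (1 - μ) / 3 * 3 by ring]
      exact ENNReal.div_mul_cancel (by norm_num) (by norm_num)
    calc μ + δ + δ = μ + (δ + δ) := by rw [add_assoc]
      _ < μ + (δ + δ + δ) := by
          refine ENNReal.add_lt_add_left hμtop ?_
          exact ENNReal.lt_add_right (by simp [ENNReal.add_ne_top, hδtop]) hδ0
      _ = μ + (1 - μ) := by rw [h3δ]
      _ = 1 := add_tsub_cancel_of_le hmean.le
  -- a right endpoint where φ ≥ 1
  set b : ℝ≥0∞ := max a (p m₀)⁻¹ with hbdef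
  have hab : a ≤ b := le_max_left _ _
  have hbtop : b ≠ ∞ := by
    rw [hbdef]
    simp only [ne_eq, max_eq_top, not_or]
    exact ⟨(ha.2.trans (by norm_num)).ne, ENNReal.inv_ne_top.2 hm₀p.ne'⟩
  have hφb : 1 ≤ ppgfPhi p b := by
    calc (1 : ℝ≥0∞) = p m₀ * (p m₀)⁻¹ := (ENNReal.mul_inv_cancel hm₀p.ne' hm₀top).symm
      _ ≤ p m₀ * b := mul_le_mul_right (le_max_right _ _) _
      _ ≤ ppgfPhi p b := hφ_lb b
  -- ppgfPhi p agrees with a continuous function on [a, b]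
  have hsub : Set.Icc a b ⊆ {s : ℝ≥0∞ | 0 < s ∧ s ≠ ⊤} := by
    intro s hs
    exact ⟨zero_lt_one.trans (ha1.trans_le hs.1), (hs.2.trans_lt hbtop.lt_top).ne⟩
  have hne0 : ∀ s ∈ Set.Icc a b, s - 1 ≠ 0 := by
    intro s hs
    simpa [tsub_eq_zero_iff_le] using (ha1.trans_le hs.1).not_ge
  have hnetop : ∀ s ∈ Set.Icc a b, s - 1 ≠ ∞ := by
    intro s hs
    exact (lt_of_le_of_lt (tsub_le_self) (hs.2.trans_lt hbtop.lt_top)).ne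
  have hfs1 : ∀ s ∈ Set.Icc a b, f s - 1 = (s - 1) * ppgfPhi p s := by
    intro s hs
    rw [key s ((ha1.trans_le hs.1)).le, ENNReal.add_sub_cancel_right one_ne_top]
  have hEq : ∀ s ∈ Set.Icc a b, (f s - 1) * (s - 1)⁻¹ = ppgfPhi p s := by
    intro s hs
    rw [hfs1 s hs, mul_comm (s - 1) (ppgfPhi p s), mul_assoc,
      ENNReal.mul_inv_cancel (hne0 s hs) (hnetop s hs), mul_one]
  have hφcont : ContinuousOn (ppgfPhi p) (Set.Icc a b) := by
    refine ContinuousOn.congr ?_ fun s hs => (hEq s hs).symm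
    refine ContinuousOn.ennreal_mul ?_ ?_ ?_ ?_
    · exact (ENNReal.continuous_sub_right 1).comp_continuousOn (hcont.mono hsub)
    · exact ((ENNReal.continuous_sub_right 1).inv).continuousOn
    · intro s hs
      left
      rw [hfs1 s hs]
      exact mul_ne_zero (hne0 s hs) (hφpos s (ha1.trans_le hs.1).le)
    · intro s hs
      left
      exact ENNReal.inv_ne_zero.2 (hnetop s hs)
  -- intermediate value theorem
  have hone : (1 : ℝ≥0∞) ∈ Set.Icc (ppgfPhi p a) (ppgfPhi p b) := ⟨hφa.le, hφb⟩
  obtain ⟨q, hqmem, hφq⟩ := intermediate_value_Icc hab hφcont hone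
  have hq1 : 1 < q := ha1.trans_le hqmem.1
  have hqtop : q ≠ ∞ := (hqmem.2.trans_lt hbtop.lt_top).ne
  have hfq : f q = q := by
    rw [key q hq1.le, hφq, mul_one, tsub_add_cancel_of_le hq1.le]
  -- from a fixed point we get ppgfPhi p r = 1
  have hval : ∀ r : ℝ≥0∞, 1 < r → r ≠ ∞ → f r = r → ppgfPhi p r = 1 := by
    intro r h1 htop hfr
    have hk := key r h1.le
    rw [hfr] at hk
    have hr0 : r - 1 ≠ 0 := by simpa [tsub_eq_zero_iff_le] using h1.not_ge
    have hrt : r - 1 ≠ ∞ := (lt_of_le_of_lt (tsub_le_self) htop.lt_top).ne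
    have : (r - 1) * ppgfPhi p r + 1 = (r - 1) * 1 + 1 := by
      rw [mul_one, tsub_add_cancel_of_le h1.le, ← hk]
    have := (ENNReal.add_left_inj one_ne_top).mp this
    exact (ENNReal.mul_right_inj hr0 hrt).mp this
  refine ⟨q, ⟨hq1, hqtop, hfq⟩, ?_⟩
  rintro y ⟨hy1, hytop, hyf⟩
  have hφy : ppgfPhi p y = 1 := hval y hy1 hytop hyf
  have hφq1 : ppgfPhi p q = 1 := hφq
  rcases lt_trichotomy y q with h | h | h
  · exfalso
    have := ppgfPhi_strict p hm₀2 hm₀p.ne' hm₀top h (by rw [hφy]; exact one_ne_top)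
    rw [hφy, hφq1] at this
    exact lt_irrefl 1 this
  · exact h
  · exfalso
    have := ppgfPhi_strict p hm₀2 hm₀p.ne' hm₀top h (by rw [hφq1]; exact one_ne_top)
    rw [hφy, hφq1] at this
    exact lt_irrefl 1 this
end

section
/- Let X be a single-type Galton–Watson process whose extinction probability is 1, with generating function f, and let A ≥ 1 satisfy f(A) = A with A finite. Define a new offspring distribution by p̂_m = p_m A^{m-1}. Then the Galton–Watson process with offspring distribution p̂ has extinction probability 1/A, and conditioned on extinction it has the law of X. -/
open MeasureTheory ProbabilityTheory ENNReal

/-- The Galton–Watson process built from an array `ξ` of offspring variables: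
`X 0 = 1` and `X (n+1) ω = ∑_{i < X n ω} ξ n i ω`. -/
def gwProcess {Ω : Type*} (ξ : ℕ → ℕ → Ω → ℕ) : ℕ → Ω → ℕ
  | 0, _ => 1
  | n + 1, ω => ∑ i ∈ Finset.range (gwProcess ξ n ω), ξ n i ω

/-- The event that the Galton–Watson process eventually becomes extinct. -/
def gwExtinction {Ω : Type*} (ξ : ℕ → ℕ → Ω → ℕ) : Set Ω :=
  {ω | ∃ N, ∀ n ≥ N, gwProcess ξ n ω = 0}

namespace GWAux

variable {Ω : Type*}

/-- Trajectory event. -/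
def trajSet (ξ : ℕ → ℕ → Ω → ℕ) (w : ℕ → ℕ) (N : ℕ) : Set Ω :=
  {ω | ∀ i ≤ N, gwProcess ξ i ω = w i}

/-- The finite index set of offspring variables relevant to a trajectory `w` up to time `N`. -/
def gwIdx (w : ℕ → ℕ) (N : ℕ) : Finset (ℕ × ℕ) :=
  (Finset.range N).biUnion fun k => {k} ×ˢ Finset.range (w k)

lemma mem_gwIdx {w : ℕ → ℕ} {N : ℕ} {pr : ℕ × ℕ} :
    pr ∈ gwIdx w N ↔ pr.1 < N ∧ pr.2 < w pr.1 := by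
  simp only [gwIdx, Finset.mem_biUnion, Finset.mem_range, Finset.mem_product,
    Finset.mem_singleton]
  constructor
  · rintro ⟨k, hk, h1, h2⟩
    exact ⟨h1 ▸ hk, h1 ▸ h2⟩
  · rintro ⟨h1, h2⟩
    exact ⟨pr.1, h1, rfl, h2⟩

lemma pairwiseDisjoint_gwIdx (w : ℕ → ℕ) (N : ℕ) :
    (↑(Finset.range N) : Set ℕ).PairwiseDisjoint fun k => ({k} ×ˢ Finset.range (w k)) := by
  intro k _ k' _ hkk'
  rw [Function.onFun, Finset.disjoint_left]
  intro pr h1 h2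
  rw [Finset.mem_product, Finset.mem_singleton] at h1 h2
  exact hkk' (h1.1 ▸ h2.1 ▸ rfl)

lemma sum_gwIdx (w : ℕ → ℕ) (N : ℕ) (e : ℕ × ℕ → ℕ) :
    ∑ pr ∈ gwIdx w N, e pr = ∑ k ∈ Finset.range N, ∑ i ∈ Finset.range (w k), e (k, i) := by
  rw [gwIdx, Finset.sum_biUnion (pairwiseDisjoint_gwIdx w N)]
  refine Finset.sum_congr rfl fun k _ => ?_
  rw [Finset.sum_product, Finset.sum_singleton]

lemma card_gwIdx (w : ℕ → ℕ) (N : ℕ) :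
    (gwIdx w N).card = ∑ k ∈ Finset.range N, w k := by
  rw [Finset.card_eq_sum_ones, sum_gwIdx]
  simp

/-- Extension of a configuration on `gwIdx w N` to a total function by zero. -/
def gwExtFun (w : ℕ → ℕ) (N : ℕ) (h : ↥(gwIdx w N) → ℕ) : ℕ × ℕ → ℕ :=
  fun pr => if hpr : pr ∈ gwIdx w N then h ⟨pr, hpr⟩ else 0

/-- A configuration is valid if it produces the trajectory `w`. -/
def gwValid (w : ℕ → ℕ) (N : ℕ) (h : ↥(gwIdx w N) → ℕ) : Prop :=
  w 0 = 1 ∧ ∀ k < N, ∑ i ∈ Finset.range (w k), gwExtFun w N h (k, i) = w (k + 1)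

open scoped Classical in
/-- The cell of a configuration. -/
def gwCell (ξ : ℕ → ℕ → Ω → ℕ) (w : ℕ → ℕ) (N : ℕ) (h : ↥(gwIdx w N) → ℕ) : Set Ω :=
  if gwValid w N h then
    ⋂ pr ∈ gwIdx w N, (fun ω => ξ pr.1 pr.2 ω) ⁻¹' {gwExtFun w N h pr}
  else ∅

lemma gw_absorb (ξ : ℕ → ℕ → Ω → ℕ) {n m : ℕ} (hnm : n ≤ m) {ω : Ω}
    (h : gwProcess ξ n ω = 0) : gwProcess ξ m ω = 0 := by
  induction m with
  | zero => exact Nat.le_zero.mp hnm ▸ h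
  | succ m ih =>
    rcases Nat.eq_or_lt_of_le hnm with rfl | hlt
    · exact h
    · have h0 := ih (Nat.lt_succ_iff.mp hlt)
      simp [gwProcess, h0]

lemma gwExtinction_eq (ξ : ℕ → ℕ → Ω → ℕ) :
    gwExtinction ξ = ⋃ n, {ω | gwProcess ξ n ω = 0} := by
  ext ω
  constructor
  · rintro ⟨N, hN⟩
    exact Set.mem_iUnion.mpr ⟨N, hN N le_rfl⟩
  · rintro h
    obtain ⟨n, hn⟩ := Set.mem_iUnion.mp h
    exact ⟨n, fun m hm => gw_absorb ξ hm hn⟩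

lemma gwProcess_measurable [MeasurableSpace Ω] (ξ : ℕ → ℕ → Ω → ℕ)
    (hmeas : ∀ n i, Measurable (ξ n i)) (n : ℕ) : Measurable (gwProcess ξ n) := by
  induction n with
  | zero => exact measurable_const
  | succ n ih =>
    have hsum : ∀ a : ℕ, Measurable fun ω => ∑ i ∈ Finset.range a, ξ n i ω :=
      fun a => Finset.measurable_sum _ fun i _ => hmeas n i
    apply measurable_to_countable'
    intro m
    have : gwProcess ξ (n + 1) ⁻¹' {m} =
        ⋃ a : ℕ, (gwProcess ξ n ⁻¹' {a}) ∩ ((fun ω => ∑ i ∈ Finset.range a, ξ n i ω) ⁻¹' {m}) := by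
      ext ω
      simp only [Set.mem_preimage, Set.mem_singleton_iff, Set.mem_iUnion, Set.mem_inter_iff]
      constructor
      · intro hm
        exact ⟨gwProcess ξ n ω, rfl, hm⟩
      · rintro ⟨a, ha, hm⟩
        show (∑ i ∈ Finset.range (gwProcess ξ n ω), ξ n i ω) = m
        rw [ha]; exact hm
    rw [this]
    exact MeasurableSet.iUnion fun a =>
      (ih (measurableSet_singleton a)).inter ((hsum a) (measurableSet_singleton m))

lemma trajSet_measurable [MeasurableSpace Ω] (ξ : ℕ → ℕ → Ω → ℕ)
    (hmeas : ∀ n i, Measurable (ξ n i)) (w : ℕ → ℕ) (N : ℕ) :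
    MeasurableSet (trajSet ξ w N) := by
  have : trajSet ξ w N = ⋂ i ∈ Finset.range (N + 1), gwProcess ξ i ⁻¹' {w i} := by
    ext ω
    simp only [trajSet, Set.mem_setOf_eq, Set.mem_iInter, Set.mem_preimage,
      Set.mem_singleton_iff, Finset.mem_range, Nat.lt_succ_iff]
  rw [this]
  exact MeasurableSet.biInter (Finset.range (N + 1)).countable_toSet fun i _ =>
    gwProcess_measurable ξ hmeas i (measurableSet_singleton (w i))

lemma gwCell_measurable [MeasurableSpace Ω] (ξ : ℕ → ℕ → Ω → ℕ)
    (hmeas : ∀ n i, Measurable (ξ n i)) (w : ℕ → ℕ) (N : ℕ) (h : ↥(gwIdx w N) → ℕ) :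
    MeasurableSet (gwCell ξ w N h) := by
  rw [gwCell]
  split
  · exact MeasurableSet.biInter (gwIdx w N).countable_toSet fun pr _ =>
      (hmeas pr.1 pr.2) (measurableSet_singleton _)
  · exact MeasurableSet.empty

lemma gwCell_disjoint (ξ : ℕ → ℕ → Ω → ℕ) (w : ℕ → ℕ) (N : ℕ) :
    Pairwise (Function.onFun Disjoint (gwCell ξ w N)) := by
  intro h h' hne
  rw [Function.onFun, Set.disjoint_left]
  intro ω hω hω'
  rw [gwCell] at hω hω'
  split at hω
  · split at hω'
    · apply hne
      funext pr
      have e1 := Set.mem_iInter₂.mp hω pr pr.2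
      have e2 := Set.mem_iInter₂.mp hω' pr pr.2
      simp only [Set.mem_preimage, Set.mem_singleton_iff, gwExtFun, pr.2, dif_pos] at e1 e2
      rw [← e1, ← e2]
    · exact hω'
  · exact hω

lemma iUnion_gwCell (ξ : ℕ → ℕ → Ω → ℕ) (w : ℕ → ℕ) (N : ℕ) :
    ⋃ h : ↥(gwIdx w N) → ℕ, gwCell ξ w N h = trajSet ξ w N := by
  ext ω
  simp only [Set.mem_iUnion]
  constructor
  · rintro ⟨h, hω⟩
    rw [gwCell] at hω
    split at hω
    case isTrue hval =>
      have hx : ∀ pr (hpr : pr ∈ gwIdx w N), ξ pr.1 pr.2 ω = h ⟨pr, hpr⟩ := by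
        intro pr hpr
        have := Set.mem_iInter₂.mp hω pr hpr
        simpa [gwExtFun, hpr] using this
      intro i hi
      induction i with
      | zero => exact hval.1.symm
      | succ k ihk =>
        have hk : k < N := Nat.lt_of_succ_le hi
        have hXk : gwProcess ξ k ω = w k := ihk (Nat.le_of_succ_le hi)
        show (∑ j ∈ Finset.range (gwProcess ξ k ω), ξ k j ω) = w (k + 1)
        rw [hXk, ← hval.2 k hk]
        refine Finset.sum_congr rfl fun j hj => ?_
        have hmem : ((k, j) : ℕ × ℕ) ∈ gwIdx w N :=
          mem_gwIdx.mpr ⟨hk, Finset.mem_range.mp hj⟩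
        rw [gwExtFun, dif_pos hmem, ← hx (k, j) hmem]
    case isFalse => exact absurd hω (Set.notMem_empty ω)
  · intro hω
    refine ⟨fun pr => ξ pr.1.1 pr.1.2 ω, ?_⟩
    have hval : gwValid w N (fun pr => ξ pr.1.1 pr.1.2 ω) := by
      constructor
      · exact (hω 0 (Nat.zero_le N)).symm
      · intro k hk
        have h1 : gwProcess ξ k ω = w k := hω k (Nat.le_of_lt hk)
        have h2 : gwProcess ξ (k + 1) ω = w (k + 1) := hω (k + 1) hk
        rw [← h2]
        show (∑ i ∈ Finset.range (w k), gwExtFun w N (fun pr => ξ pr.1.1 pr.1.2 ω) (k, i))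
          = gwProcess ξ (k + 1) ω
        have : gwProcess ξ (k + 1) ω = ∑ i ∈ Finset.range (gwProcess ξ k ω), ξ k i ω := rfl
        rw [this, h1]
        refine Finset.sum_congr rfl fun i hi => ?_
        have hmem : ((k, i) : ℕ × ℕ) ∈ gwIdx w N :=
          mem_gwIdx.mpr ⟨hk, Finset.mem_range.mp hi⟩
        rw [gwExtFun, dif_pos hmem]
    rw [gwCell, if_pos hval]
    refine Set.mem_iInter₂.mpr fun pr hpr => ?_
    simp [gwExtFun, hpr]

end GWAux

namespace GWAux

variable {Ω : Type*} [MeasurableSpace Ω]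

open scoped Classical in
lemma gwCell_measure (P : Measure Ω) (ξ : ℕ → ℕ → Ω → ℕ)
    (hindep : iIndepFun (fun (pr : ℕ × ℕ) ω => ξ pr.1 pr.2 ω) P)
    (p : ℕ → ℝ≥0∞) (hlaw : ∀ n i m, P {ω | ξ n i ω = m} = p m)
    (w : ℕ → ℕ) (N : ℕ) (h : ↥(gwIdx w N) → ℕ) :
    P (gwCell ξ w N h) =
      if gwValid w N h then ∏ pr ∈ gwIdx w N, p (gwExtFun w N h pr) else 0 := by
  rw [gwCell]
  split
  · rw [hindep.measure_inter_preimage_eq_mul (gwIdx w N)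
      (sets := fun pr => {gwExtFun w N h pr}) (fun pr _ => measurableSet_singleton _)]
    refine Finset.prod_congr rfl fun pr _ => ?_
    exact hlaw pr.1 pr.2 _
  · exact measure_empty

lemma traj_measure (P : Measure Ω) (ξ : ℕ → ℕ → Ω → ℕ)
    (hmeas : ∀ n i, Measurable (ξ n i)) (w : ℕ → ℕ) (N : ℕ) :
    P (trajSet ξ w N) = ∑' h : ↥(gwIdx w N) → ℕ, P (gwCell ξ w N h) := by
  rw [← iUnion_gwCell ξ w N,
    measure_iUnion (gwCell_disjoint ξ w N) (fun h => gwCell_measurable ξ hmeas w N h)]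

lemma cell_ratio (A : ℝ≥0∞) (hA0 : A ≠ 0) (hAtop : A ≠ ⊤)
    (p phat : ℕ → ℝ≥0∞) (hphat : ∀ m, phat m * A = p m * A ^ m)
    (w : ℕ → ℕ) (N : ℕ) (h : ↥(gwIdx w N) → ℕ) (hval : gwValid w N h) :
    (∏ pr ∈ gwIdx w N, phat (gwExtFun w N h pr)) * A
      = (∏ pr ∈ gwIdx w N, p (gwExtFun w N h pr)) * A ^ w N := by
  have key : (∏ pr ∈ gwIdx w N, phat (gwExtFun w N h pr)) * A ^ (gwIdx w N).card
      = (∏ pr ∈ gwIdx w N, p (gwExtFun w N h pr))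
          * A ^ (∑ pr ∈ gwIdx w N, gwExtFun w N h pr) := by
    rw [← Finset.prod_const, ← Finset.prod_mul_distrib, ← Finset.prod_pow_eq_pow_sum,
      ← Finset.prod_mul_distrib]
    exact Finset.prod_congr rfl fun pr _ => hphat _
  rw [card_gwIdx, sum_gwIdx] at key
  have hsum2 : ∑ k ∈ Finset.range N, ∑ i ∈ Finset.range (w k), gwExtFun w N h (k, i)
      = ∑ k ∈ Finset.range N, w (k + 1) :=
    Finset.sum_congr rfl fun k hk => hval.2 k (Finset.mem_range.mp hk)
  rw [hsum2] at key
  have hpow0 : (A : ℝ≥0∞) ^ (∑ k ∈ Finset.range N, w k) ≠ 0 := pow_ne_zero _ hA0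
  have hpowt : (A : ℝ≥0∞) ^ (∑ k ∈ Finset.range N, w k) ≠ ⊤ := ENNReal.pow_ne_top hAtop
  apply (ENNReal.mul_left_inj hpow0 hpowt).mp
  calc (∏ pr ∈ gwIdx w N, phat (gwExtFun w N h pr)) * A * A ^ (∑ k ∈ Finset.range N, w k)
      = (∏ pr ∈ gwIdx w N, phat (gwExtFun w N h pr)) * A ^ (∑ k ∈ Finset.range N, w k) * A := by
        ring
    _ = (∏ pr ∈ gwIdx w N, p (gwExtFun w N h pr)) * A ^ (∑ k ∈ Finset.range N, w (k + 1)) * A := by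
        rw [key]
    _ = (∏ pr ∈ gwIdx w N, p (gwExtFun w N h pr)) * A ^ ((∑ k ∈ Finset.range N, w (k + 1)) + 1) := by
        rw [pow_succ]; ring
    _ = (∏ pr ∈ gwIdx w N, p (gwExtFun w N h pr)) * A ^ (w N + ∑ k ∈ Finset.range N, w k) := by
        have h1 : (∑ k ∈ Finset.range N, w (k + 1)) + w 0 = ∑ k ∈ Finset.range (N + 1), w k :=
          (Finset.sum_range_succ' w N).symm
        have h2 : (∑ k ∈ Finset.range N, w k) + w N = ∑ k ∈ Finset.range (N + 1), w k :=
          (Finset.sum_range_succ w N).symm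
        have h0 := hval.1
        have hexp : (∑ k ∈ Finset.range N, w (k + 1)) + 1
            = w N + ∑ k ∈ Finset.range N, w k := by omega
        rw [hexp]
    _ = (∏ pr ∈ gwIdx w N, p (gwExtFun w N h pr)) * A ^ w N * A ^ (∑ k ∈ Finset.range N, w k) := by
        rw [pow_add]; ring

lemma traj_key {Ω' : Type*} [MeasurableSpace Ω'] (P : Measure Ω) (P' : Measure Ω')
    (ξ : ℕ → ℕ → Ω → ℕ) (hmeas : ∀ n i, Measurable (ξ n i))
    (hindep : iIndepFun (fun (pr : ℕ × ℕ) ω => ξ pr.1 pr.2 ω) P)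
    (p : ℕ → ℝ≥0∞) (hlaw : ∀ n i m, P {ω | ξ n i ω = m} = p m)
    (ξ' : ℕ → ℕ → Ω' → ℕ) (hmeas' : ∀ n i, Measurable (ξ' n i))
    (hindep' : iIndepFun (fun (pr : ℕ × ℕ) ω => ξ' pr.1 pr.2 ω) P')
    (phat : ℕ → ℝ≥0∞) (hlaw' : ∀ n i m, P' {ω | ξ' n i ω = m} = phat m)
    (A : ℝ≥0∞) (hA0 : A ≠ 0) (hAtop : A ≠ ⊤)
    (hphat : ∀ m, phat m * A = p m * A ^ m) (w : ℕ → ℕ) (N : ℕ) :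
    P' (trajSet ξ' w N) * A = P (trajSet ξ w N) * A ^ w N := by
  classical
  rw [traj_measure P' ξ' hmeas' w N, traj_measure P ξ hmeas w N,
    ← ENNReal.tsum_mul_right, ← ENNReal.tsum_mul_right]
  refine tsum_congr fun h => ?_
  rw [gwCell_measure P' ξ' hindep' phat hlaw' w N h, gwCell_measure P ξ hindep p hlaw w N h]
  by_cases hval : gwValid w N h
  · rw [if_pos hval, if_pos hval]
    exact cell_ratio A hA0 hAtop p phat hphat w N h hval
  · rw [if_neg hval, if_neg hval, zero_mul, zero_mul]

end GWAux

namespace GWAux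

variable {Ω : Type*}

lemma mem_trajSet {ξ : ℕ → ℕ → Ω → ℕ} {w : ℕ → ℕ} {N : ℕ} {ω : Ω} :
    ω ∈ trajSet ξ w N ↔ ∀ i ≤ N, gwProcess ξ i ω = w i := Iff.rfl

/-- Extension of a finite vector by zeros. -/
def uext (n m : ℕ) (u : Fin (n + m + 1) → ℕ) : ℕ → ℕ :=
  fun i => if h : i < n + m + 1 then u ⟨i, h⟩ else 0

open scoped Classical in
/-- Trajectory piece of `trajSet v n ∩ {X (n+m) = 0}` indexed by full trajectories. -/
def gwF (ξ : ℕ → ℕ → Ω → ℕ) (v : ℕ → ℕ) (n m : ℕ) (u : Fin (n + m + 1) → ℕ) : Set Ω :=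
  if (∀ i ≤ n, uext n m u i = v i) ∧ uext n m u (n + m) = 0 then
    trajSet ξ (uext n m u) (n + m)
  else ∅

lemma gwF_measurable [MeasurableSpace Ω] (ξ : ℕ → ℕ → Ω → ℕ)
    (hmeas : ∀ n i, Measurable (ξ n i)) (v : ℕ → ℕ) (n m : ℕ) (u : Fin (n + m + 1) → ℕ) :
    MeasurableSet (gwF ξ v n m u) := by
  rw [gwF]
  split
  · exact trajSet_measurable ξ hmeas _ _
  · exact MeasurableSet.empty

lemma gwF_disjoint (ξ : ℕ → ℕ → Ω → ℕ) (v : ℕ → ℕ) (n m : ℕ) :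
    Pairwise (Function.onFun Disjoint (gwF ξ v n m)) := by
  intro u u' hne
  rw [Function.onFun, Set.disjoint_left]
  intro ω hω hω'
  rw [gwF] at hω hω'
  split at hω
  · split at hω'
    · apply hne
      funext j
      have e1 := mem_trajSet.mp hω j.1 (Nat.lt_succ_iff.mp j.2)
      have e2 := mem_trajSet.mp hω' j.1 (Nat.lt_succ_iff.mp j.2)
      have e3 : uext n m u j.1 = uext n m u' j.1 := by rw [← e1, ← e2]
      simpa [uext, j.2] using e3
    · exact hω'
  · exact hω

lemma gwF_union (ξ : ℕ → ℕ → Ω → ℕ) (v : ℕ → ℕ) (n m : ℕ) :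
    ⋃ u : Fin (n + m + 1) → ℕ, gwF ξ v n m u
      = trajSet ξ v n ∩ {ω | gwProcess ξ (n + m) ω = 0} := by
  ext ω
  simp only [Set.mem_iUnion]
  constructor
  · rintro ⟨u, hu⟩
    rw [gwF] at hu
    split at hu
    case isTrue hc =>
      refine ⟨fun i hi => ?_, ?_⟩
      · rw [mem_trajSet.mp hu i (le_trans hi (Nat.le_add_right n m)), hc.1 i hi]
      · show gwProcess ξ (n + m) ω = 0
        rw [mem_trajSet.mp hu (n + m) le_rfl, hc.2]
    case isFalse => exact absurd hu (Set.notMem_empty ω)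
  · rintro ⟨h1, h2⟩
    refine ⟨fun j => gwProcess ξ j.1 ω, ?_⟩
    have hagree : ∀ i ≤ n + m, uext n m (fun j => gwProcess ξ j.1 ω) i = gwProcess ξ i ω := by
      intro i hi
      have hlt : i < n + m + 1 := by omega
      simp only [uext, dif_pos hlt]
    rw [gwF, if_pos ?cond]
    case cond =>
      constructor
      · intro i hi
        rw [hagree i (by omega)]
        exact h1 i hi
      · rw [hagree (n + m) le_rfl]
        exact h2
    · intro i hi
      rw [hagree i hi]


lemma traj_ext_decomp (ξ : ℕ → ℕ → Ω → ℕ) (v : ℕ → ℕ) (n : ℕ) :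
    trajSet ξ v n ∩ gwExtinction ξ
      = ⋃ m, trajSet ξ v n ∩ {ω | gwProcess ξ (n + m) ω = 0} := by
  ext ω
  simp only [Set.mem_inter_iff, Set.mem_iUnion]
  constructor
  · rintro ⟨h1, N₀, hN₀⟩
    exact ⟨N₀, h1, hN₀ (n + N₀) (by omega)⟩
  · rintro ⟨m, h1, h2⟩
    exact ⟨h1, ⟨n + m, fun k hk => gw_absorb ξ hk h2⟩⟩

lemma traj_zero_monotone (ξ : ℕ → ℕ → Ω → ℕ) (v : ℕ → ℕ) (n : ℕ) :
    Monotone fun m => trajSet ξ v n ∩ {ω | gwProcess ξ (n + m) ω = 0} := by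
  intro m m' hmm'
  exact Set.inter_subset_inter_right _ fun ω hω => gw_absorb ξ (by omega) hω

lemma trajSet_one_zero (ξ : ℕ → ℕ → Ω → ℕ) : trajSet ξ (fun _ => 1) 0 = Set.univ := by
  ext ω
  simp only [trajSet, Set.mem_setOf_eq, Set.mem_univ, iff_true]
  intro i hi
  rw [Nat.le_zero.mp hi]
  rfl

end GWAux

open GWAux

/-- Let `X` be a single-type Galton–Watson process with offspring
distribution `p` and extinction probability `1`, and let `A ∈ [1,∞)` be a finite fixed
point of its generating function. Define `p̂ₘ = pₘ A^{m-1}` (stated as `p̂ₘ ⬝ A = pₘ Aᵐ`),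
and let `X̂` be a Galton–Watson process with offspring distribution `p̂`. Then `X̂` has
extinction probability `1/A`, and conditioned on extinction `X̂` has the law of `X`:
for every finite trajectory, `P̂[X̂ follows it and dies out] ⬝ A = P[X follows it]`. -/
theorem gw_conjugate_process
    {Ω : Type*} [MeasurableSpace Ω] (P : Measure Ω) [IsProbabilityMeasure P]
    (ξ : ℕ → ℕ → Ω → ℕ) (hmeas : ∀ n i, Measurable (ξ n i))
    (hindep : iIndepFun (fun (pr : ℕ × ℕ) ω => ξ pr.1 pr.2 ω) P)
    (p : ℕ → ℝ≥0∞) (hlaw : ∀ n i m, P {ω | ξ n i ω = m} = p m)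
    (hprob : ∑' m, p m = 1)
    (hext : P (gwExtinction ξ) = 1)
    (A : ℝ≥0∞) (hA1 : 1 ≤ A) (hAtop : A ≠ ⊤)
    (hfix : ∑' m, p m * A ^ m = A)
    (phat : ℕ → ℝ≥0∞) (hphat : ∀ m, phat m * A = p m * A ^ m)
    {Ω' : Type*} [MeasurableSpace Ω'] (P' : Measure Ω') [IsProbabilityMeasure P']
    (ξ' : ℕ → ℕ → Ω' → ℕ) (hmeas' : ∀ n i, Measurable (ξ' n i))
    (hindep' : iIndepFun (fun (pr : ℕ × ℕ) ω => ξ' pr.1 pr.2 ω) P')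
    (hlaw' : ∀ n i m, P' {ω | ξ' n i ω = m} = phat m) :
    P' (gwExtinction ξ') = A⁻¹ ∧
      ∀ (n : ℕ) (v : ℕ → ℕ),
        P' ({ω | ∀ i ≤ n, gwProcess ξ' i ω = v i} ∩ gwExtinction ξ') * A
          = P {ω | ∀ i ≤ n, gwProcess ξ i ω = v i} := by
  classical
  have hA0 : A ≠ 0 := (lt_of_lt_of_le zero_lt_one hA1).ne'
  have key := traj_key P P' ξ hmeas hindep p hlaw ξ' hmeas' hindep' phat hlaw' A hA0 hAtop hphat
  -- the per-generation identity
  have hDm : ∀ (v : ℕ → ℕ) (n m : ℕ),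
      P' (trajSet ξ' v n ∩ {ω | gwProcess ξ' (n + m) ω = 0}) * A
        = P (trajSet ξ v n ∩ {ω | gwProcess ξ (n + m) ω = 0}) := by
    intro v n m
    rw [← gwF_union ξ' v n m, ← gwF_union ξ v n m,
      measure_iUnion (gwF_disjoint ξ' v n m) (gwF_measurable ξ' hmeas' v n m),
      measure_iUnion (gwF_disjoint ξ v n m) (gwF_measurable ξ hmeas v n m),
      ← ENNReal.tsum_mul_right]
    refine tsum_congr fun u => ?_
    rw [gwF, gwF]
    split
    case isTrue hc =>
      have hk := key (uext n m u) (n + m)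
      rw [hc.2, pow_zero, mul_one] at hk
      exact hk
    case isFalse => simp
  -- the main identity, with extinction kept on both sides
  have step2 : ∀ (v : ℕ → ℕ) (n : ℕ),
      P' (trajSet ξ' v n ∩ gwExtinction ξ') * A = P (trajSet ξ v n ∩ gwExtinction ξ) := by
    intro v n
    rw [traj_ext_decomp ξ v n, traj_ext_decomp ξ' v n,
      Directed.measure_iUnion (traj_zero_monotone ξ' v n).directed_le,
      Directed.measure_iUnion (traj_zero_monotone ξ v n).directed_le, ENNReal.iSup_mul]
    exact iSup_congr fun m => hDm v n m
  have hextmeas : MeasurableSet (gwExtinction ξ) := by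
    rw [gwExtinction_eq]
    exact MeasurableSet.iUnion fun k =>
      gwProcess_measurable ξ hmeas k (measurableSet_singleton 0)
  have hconull : P (gwExtinction ξ)ᶜ = 0 := by
    rw [measure_compl hextmeas (measure_ne_top P _), measure_univ, hext, tsub_self]
  constructor
  · have h2 := step2 (fun _ => 1) 0
    rw [trajSet_one_zero ξ', trajSet_one_zero ξ, Set.univ_inter, Set.univ_inter, hext] at h2
    exact ENNReal.eq_inv_of_mul_eq_one_left h2
  · intro n v
    have h2 := step2 v n
    rw [measure_inter_conull hconull] at h2
    exact h2
end

section
/- Consider a d-type branching process for which the extinction probability from every initial type is one, and let f : (0,∞)^d → (0,∞]^d be its generating function. If q ∈ (0,∞)^d satisfies f(q) = q, then q_k ≥ 1 for every k ∈ {1,…,d}. -/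
open MeasureTheory ProbabilityTheory ENNReal Filter Set

/-- Extended exponential `[0,∞] → [1,∞]`. -/
noncomputable def eexp (x : ℝ≥0∞) : ℝ≥0∞ :=
  if x = ⊤ then ⊤ else ENNReal.ofReal (Real.exp x.toReal)

/-- Extended logarithm, suitable for values in `[1,∞]`. -/
noncomputable def elog (y : ℝ≥0∞) : ℝ≥0∞ :=
  if y = ⊤ then ⊤ else ENNReal.ofReal (Real.log y.toReal)

/-- The generating function of the `n`-th generation of a `d`-type branching process:
`F P X n q k = 𝔼ₖ[∏ⱼ qⱼ ^ Xⱼ(n)]`, where `P k` is the law of the process started from a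
single individual of type `k`. Values are in `[0,∞]`, with the conventions `∞ ^ 0 = 1`
and `∞ ^ x = ∞` for `x > 0` built into `ℝ≥0∞`. -/
noncomputable def genFun {d : ℕ} {Ω : Type*} [MeasurableSpace Ω]
    (P : Fin d → Measure Ω) (X : ℕ → Ω → Fin d → ℕ) (n : ℕ)
    (q : Fin d → ℝ≥0∞) : Fin d → ℝ≥0∞ :=
  fun k => ∫⁻ ω, ∏ j, (q j) ^ (X n ω j) ∂ (P k)

/-- The log-Laplace transform of the `n`-th generation:
`logGenFun P X n λ k = log 𝔼ₖ[exp (∑ⱼ λⱼ Xⱼ(n))]`, i.e. `g⁽ⁿ⁾(λ) = log f⁽ⁿ⁾(e^λ)`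
componentwise, viewed as a map `[0,∞]^d → [0,∞]^d`. -/
noncomputable def logGenFun {d : ℕ} {Ω : Type*} [MeasurableSpace Ω]
    (P : Fin d → Measure Ω) (X : ℕ → Ω → Fin d → ℕ) (n : ℕ)
    (l : Fin d → ℝ≥0∞) : Fin d → ℝ≥0∞ :=
  fun k => elog (genFun P X n (fun j => eexp (l j)) k)

/-- The event that the branching process eventually becomes extinct. -/
def ExtinctionEvent {d : ℕ} {Ω : Type*} (X : ℕ → Ω → Fin d → ℕ) : Set Ω :=
  {ω | ∃ N, ∀ n ≥ N, X n ω = 0}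

/-- Positive regularity: for some `N`, started from any type `k`, there is a positive
chance of having an individual of type `j` in generation `N`, for every `j`. -/
def PositiveRegular {d : ℕ} {Ω : Type*} [MeasurableSpace Ω]
    (P : Fin d → Measure Ω) (X : ℕ → Ω → Fin d → ℕ) : Prop :=
  ∃ N, ∀ k j, 0 < P k {ω | 1 ≤ X N ω j}

/-- Non-singularity: some type has a positive chance of at least two total offspring. -/
def NonSingular {d : ℕ} {Ω : Type*} [MeasurableSpace Ω]
    (P : Fin d → Measure Ω) (X : ℕ → Ω → Fin d → ℕ) : Prop :=
  ∃ k, 0 < P k {ω | 2 ≤ ∑ j, X 1 ω j}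

/-- The mean matrix `M k j = 𝔼ₖ[Xⱼ(1)]`. -/
noncomputable def meanMatrix {d : ℕ} {Ω : Type*} [MeasurableSpace Ω]
    (P : Fin d → Measure Ω) (X : ℕ → Ω → Fin d → ℕ) : Matrix (Fin d) (Fin d) ℝ :=
  fun k j => (∫⁻ ω, (X 1 ω j : ℝ≥0∞) ∂ (P k)).toReal

/-- Subcriticality: the mean matrix has finite entries and all of its (complex)
eigenvalues have modulus `< 1`; for a nonnegative matrix this says exactly that the
largest (Perron–Frobenius) eigenvalue is `< 1`. -/
def Subcritical {d : ℕ} {Ω : Type*} [MeasurableSpace Ω]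
    (P : Fin d → Measure Ω) (X : ℕ → Ω → Fin d → ℕ) : Prop :=
  (∀ k j, ∫⁻ ω, (X 1 ω j : ℝ≥0∞) ∂ (P k) ≠ ⊤) ∧
    ∀ μ ∈ spectrum ℂ ((meanMatrix P X).map (Complex.ofReal)), ‖μ‖ < 1

/-- Continuity of each component of the generating function on `(0,∞]^d`
(Hypothesis III of the main theorem). -/
def GenFunContinuous {d : ℕ} {Ω : Type*} [MeasurableSpace Ω]
    (P : Fin d → Measure Ω) (X : ℕ → Ω → Fin d → ℕ) : Prop :=
  ∀ k, ContinuousOn (fun q => genFun P X 1 q k) {q : Fin d → ℝ≥0∞ | ∀ j, 0 < q j}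

/-- For a `d`-type branching process whose extinction probability from
every initial type is one, any fixed point `q ∈ (0,∞)^d` of the generating function
satisfies `q k ≥ 1` for every `k`. -/
theorem fixed_point_ge_one
    {d : ℕ} {Ω : Type*} [MeasurableSpace Ω]
    (P : Fin d → Measure Ω) (X : ℕ → Ω → Fin d → ℕ)
    (hprob : ∀ k, IsProbabilityMeasure (P k))
    (hmeas : ∀ n, Measurable (X n))
    (hiter : ∀ n q, (genFun P X 1)^[n] q = genFun P X n q)
    (hext : ∀ k, P k (ExtinctionEvent X) = 1)
    (q : Fin d → ℝ≥0∞) (hq : ∀ k, 0 < q k ∧ q k ≠ ⊤)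
    (hfix : genFun P X 1 q = q) :
    ∀ k, 1 ≤ q k := by
  intro k
  have hprobk := hprob k
  have hfixn : ∀ n, genFun P X n q = q := by
    intro n
    rw [← hiter]
    exact Function.iterate_fixed hfix n
  have hmeasF : ∀ n : ℕ, Measurable fun ω => ∏ j, (q j) ^ (X n ω j) := by
    intro n
    apply Finset.measurable_prod
    intro j _
    exact (measurable_from_nat (f := fun m => q j ^ m)).comp ((hmeas n).eval)
  have hExt : MeasurableSet (ExtinctionEvent X) := by
    have hrw : ExtinctionEvent X = ⋃ N, ⋂ n, ⋂ _ : n ≥ N, X n ⁻¹' {0} := by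
      ext ω; simp [ExtinctionEvent]
    rw [hrw]
    exact MeasurableSet.iUnion fun N => MeasurableSet.iInter fun n =>
      MeasurableSet.iInter fun _ => (hmeas n) (measurableSet_singleton 0)
  have key : (1 : ℝ≥0∞) ≤ ∫⁻ ω, Filter.liminf (fun n => ∏ j, q j ^ X n ω j) atTop ∂ (P k) := by
    calc (1 : ℝ≥0∞) = P k (ExtinctionEvent X) := (hext k).symm
      _ = ∫⁻ _ω in ExtinctionEvent X, 1 ∂ (P k) := by rw [setLIntegral_one]
      _ ≤ ∫⁻ ω in ExtinctionEvent X,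
            Filter.liminf (fun n => ∏ j, q j ^ X n ω j) atTop ∂ (P k) := by
          refine setLIntegral_mono' hExt (fun ω hω => ?_)
          obtain ⟨N, hN⟩ := hω
          have hev : ∀ᶠ n in atTop, (fun n => ∏ j, q j ^ X n ω j) n = (1 : ℝ≥0∞) := by
            filter_upwards [eventually_ge_atTop N] with n hn
            simp [hN n hn]
          have : Filter.liminf (fun n => ∏ j, q j ^ X n ω j) atTop
              = Filter.liminf (fun _ : ℕ => (1 : ℝ≥0∞)) atTop :=
            Filter.liminf_congr hev
          rw [this, Filter.liminf_const]
      _ ≤ _ := setLIntegral_le_lintegral _ _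
  have fatou := lintegral_liminf_le (μ := P k) (u := atTop) (fun n => hmeasF n)
  have hval : ∀ n : ℕ, (∫⁻ ω, ∏ j, q j ^ X n ω j ∂ (P k)) = q k := by
    intro n
    have := congrFun (hfixn n) k
    simpa [genFun] using this
  calc (1 : ℝ≥0∞) ≤ _ := key
    _ ≤ Filter.liminf (fun n => ∫⁻ ω, ∏ j, q j ^ X n ω j ∂ (P k)) atTop := fatou
    _ = q k := by simp [hval, Filter.liminf_const]
end

section
/- Consider a positive regular d-type branching process with extinction probability one from every type, and let q ∈ (0,∞)^d with f(q) = q. Then either q_k = 1 for every k, or q_k > 1 for every k. -/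
open MeasureTheory ProbabilityTheory ENNReal Filter Set

/-- For a positive regular `d`-type branching process with extinction
probability one from every type, any fixed point `q ∈ (0,∞)^d` of the generating
function satisfies: either `q k = 1` for every `k`, or `q k > 1` for every `k`. -/
theorem fixed_point_dichotomy
    {d : ℕ} {Ω : Type*} [MeasurableSpace Ω]
    (P : Fin d → Measure Ω) (X : ℕ → Ω → Fin d → ℕ)
    (hprob : ∀ k, IsProbabilityMeasure (P k))
    (hmeas : ∀ n, Measurable (X n))
    (hiter : ∀ n q, (genFun P X 1)^[n] q = genFun P X n q)
    (hext : ∀ k, P k (ExtinctionEvent X) = 1)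
    (hPR : PositiveRegular P X)
    (q : Fin d → ℝ≥0∞) (hq : ∀ k, 0 < q k ∧ q k ≠ ⊤)
    (hfix : genFun P X 1 q = q) :
    (∀ k, q k = 1) ∨ (∀ k, 1 < q k) := by

  have hqfix : ∀ n, genFun P X n q = q := by
    intro n
    rw [← hiter]
    exact Function.iterate_fixed hfix n
  -- Step 1: every coordinate is at least 1.
  have hq1 : ∀ k, 1 ≤ q k := by
    intro k
    have hBmeas : ∀ n : ℕ, MeasurableSet {ω | X n ω = 0} :=
      fun n => (hmeas n) (measurableSet_singleton 0)
    have hle : ∀ n : ℕ, P k {ω | X n ω = 0} ≤ q k := by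
      intro n
      have h1 : P k {ω | X n ω = 0} ≤ genFun P X n q k := by
        rw [← lintegral_indicator_one (hBmeas n)]
        refine lintegral_mono fun ω => ?_
        by_cases hω : ω ∈ {ω | X n ω = 0}
        · rw [Set.indicator_of_mem hω]
          refine Finset.one_le_prod' fun j _ => ?_
          have : X n ω j = 0 := by
            have := hω; simp only [Set.mem_setOf_eq] at this
            rw [this]; rfl
          rw [this, pow_zero]
        · rw [Set.indicator_of_notMem hω]
          exact zero_le
      rw [hqfix n] at h1
      exact h1
    set A : ℕ → Set Ω := fun N => {ω | ∀ n ≥ N, X n ω = 0} with hA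
    have hAdir : Directed (· ⊆ ·) A := by
      refine directed_of_isDirected_le fun N M hNM ω hω n hn => hω n (le_trans hNM hn)
    have hExt : ExtinctionEvent X = ⋃ N, A N := by
      ext ω; simp [ExtinctionEvent, hA]
    have h2 : (1 : ℝ≥0∞) = ⨆ N, P k (A N) := by
      rw [← hAdir.measure_iUnion, ← hExt, hext k]
    rw [h2]
    refine iSup_le fun N => ?_
    refine le_trans (measure_mono ?_) (hle N)
    intro ω hω
    exact hω N le_rfl
  -- Step 2: if some coordinate exceeds 1, all do.
  have key : ∀ j, 1 < q j → ∀ k, 1 < q k := by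
    intro j hj k
    obtain ⟨N, hN⟩ := hPR
    set A : Set Ω := {ω | 1 ≤ X N ω j} with hAdef
    have hAmeas : MeasurableSet A := by
      have hm : Measurable fun ω => X N ω j :=
        (measurable_pi_apply j).comp (hmeas N)
      exact hm measurableSet_Ici
    set c : ℝ≥0∞ := q j - 1 with hc
    have hc0 : c ≠ 0 := by
      simp only [hc]
      exact (tsub_pos_iff_lt.mpr hj).ne'
    have hc1 : c + 1 = q j := tsub_add_cancel_of_le hj.le
    have hpt : ∀ ω, A.indicator (fun _ => c) ω + 1 ≤ ∏ i, q i ^ X N ω i := by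
      intro ω
      have hone : ∀ i ∈ Finset.univ, (1 : ℝ≥0∞) ≤ q i ^ X N ω i :=
        fun i _ => one_le_pow_of_one_le' (hq1 i) _
      by_cases hω : ω ∈ A
      · rw [Set.indicator_of_mem hω, hc1]
        calc q j ≤ q j ^ X N ω j := le_self_pow₀ (hq1 j) (by
              have : 1 ≤ X N ω j := hω
              omega)
          _ ≤ ∏ i, q i ^ X N ω i :=
              Finset.single_le_prod' hone (Finset.mem_univ j)
      · rw [Set.indicator_of_notMem hω, zero_add]
        exact Finset.one_le_prod' hone
    have hint : c * P k A + 1 ≤ q k := by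
      have h1 : (∫⁻ ω, A.indicator (fun _ => c) ω + 1 ∂ P k) ≤ genFun P X N q k :=
        lintegral_mono hpt
      have h2 : (∫⁻ ω, A.indicator (fun _ => c) ω + 1 ∂ P k)
          = c * P k A + 1 := by
        rw [lintegral_add_right _ measurable_const, lintegral_indicator_const hAmeas,
          lintegral_one, measure_univ]
      rw [h2, hqfix N] at h1
      exact h1
    calc (1 : ℝ≥0∞) < c * P k A + 1 := by
          rw [add_comm]
          exact ENNReal.lt_add_right one_ne_top (mul_ne_zero hc0 (hN k j).ne')
      _ ≤ q k := hint
  by_cases h : ∀ k, q k = 1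
  · exact Or.inl h
  · push_neg at h
    obtain ⟨j, hj⟩ := h
    exact Or.inr (key j (lt_of_le_of_ne (hq1 j) (Ne.symm hj)))
end

section
/- Let X be a subcritical d-type branching process with a.s. extinction, and g^{(n)}(λ)_k = log E_k[exp(Σ_j λ_j X_j(n))]. Fix λ ∈ [0,∞)^d \ {0} with limsup_n |g^{(n)}(λ)| < ∞. Then for every r ∈ [0,1), lim_n |g^{(n)}(rλ)| = 0. -/
open MeasureTheory ProbabilityTheory ENNReal Filter Set

/-! ### Auxiliary lemmas -/

lemma one_le_eexp (x : ℝ≥0∞) : 1 ≤ eexp x := by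
  unfold eexp
  split
  · exact le_top
  · calc (1 : ℝ≥0∞) = ENNReal.ofReal 1 := by simp
      _ ≤ ENNReal.ofReal (Real.exp x.toReal) :=
        ENNReal.ofReal_le_ofReal (Real.one_le_exp ENNReal.toReal_nonneg)

lemma eexp_zero' : eexp 0 = 1 := by simp [eexp]

lemma eexp_mul_eq_rpow (r x : ℝ≥0∞) (hr : r ≠ ⊤) (hx : x ≠ ⊤) :
    eexp (r * x) = eexp x ^ r.toReal := by
  unfold eexp
  rw [if_neg (ENNReal.mul_ne_top hr hx), if_neg hx, ENNReal.toReal_mul, mul_comm r.toReal,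
    Real.exp_mul, ← ENNReal.ofReal_rpow_of_pos (Real.exp_pos _)]

lemma tendsto_rpow_zero_aux {a : ℕ → ℝ≥0∞} {c : ℝ} (hc : 0 < c)
    (h : Tendsto a atTop (nhds 0)) : Tendsto (fun n => a n ^ c) atTop (nhds 0) := by
  rw [ENNReal.tendsto_nhds_zero] at h ⊢
  intro ε hε
  rcases eq_or_ne ε ⊤ with rfl | hεt
  · exact Eventually.of_forall fun n => le_top
  filter_upwards [h (ε ^ (1 / c)) (ENNReal.rpow_pos hε hεt)] with n hn
  calc a n ^ c ≤ (ε ^ (1 / c)) ^ c := ENNReal.rpow_le_rpow hn hc.le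
    _ = ε := by rw [← ENNReal.rpow_mul, one_div_mul_cancel hc.ne', ENNReal.rpow_one]

lemma tendsto_elog_of_tendsto_one {a : ℕ → ℝ≥0∞} (h : Tendsto a atTop (nhds 1)) :
    Tendsto (fun n => elog (a n)) atTop (nhds 0) := by
  have h2 : ∀ᶠ n in atTop, a n ≠ ⊤ := by
    filter_upwards [h.eventually_lt_const (by norm_num : (1 : ℝ≥0∞) < 2)] with n hn
    exact ne_top_of_lt hn
  have ht : Tendsto (fun n => (a n).toReal) atTop (nhds 1) := by
    have := (ENNReal.tendsto_toReal ENNReal.one_ne_top).comp h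
    simpa [Function.comp_def] using this
  have hlog : Tendsto (fun n => Real.log (a n).toReal) atTop (nhds 0) := by
    have := ((Real.continuousAt_log (by norm_num : (1 : ℝ) ≠ 0)).tendsto).comp ht
    simpa [Function.comp_def] using this
  have hof : Tendsto (fun n => ENNReal.ofReal (Real.log (a n).toReal)) atTop (nhds 0) := by
    have := (ENNReal.continuous_ofReal.tendsto 0).comp hlog
    simpa [Function.comp_def] using this
  refine Tendsto.congr' ?_ hof
  filter_upwards [h2] with n hn
  simp [elog, hn]


/-- Let `X` be a subcritical `d`-type branching process with a.s.
extinction, and `g⁽ⁿ⁾(λ)ₖ = log 𝔼ₖ[exp (∑ⱼ λⱼ Xⱼ(n))]`. Fix `λ ∈ [0,∞)^d \ {0}` with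
`limsup_n |g⁽ⁿ⁾(λ)| < ∞`. Then for every `r ∈ [0,1)`, `lim_n |g⁽ⁿ⁾(rλ)| = 0`. -/
theorem logGenFun_scaled_tendsto_zero
    {d : ℕ} {Ω : Type*} [MeasurableSpace Ω]
    (P : Fin d → Measure Ω) (X : ℕ → Ω → Fin d → ℕ)
    (hprob : ∀ k, IsProbabilityMeasure (P k))
    (hmeas : ∀ n, Measurable (X n))
    (hGiter : ∀ n l, (logGenFun P X 1)^[n] l = logGenFun P X n l)
    (hsub : Subcritical P X)
    (hext : ∀ k, P k (ExtinctionEvent X) = 1)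
    (l : Fin d → ℝ≥0∞) (hlfin : ∀ j, l j ≠ ⊤) (hl0 : l ≠ 0)
    (hbdd : limsup (fun n => ∑ k, logGenFun P X n l k) atTop ≠ ⊤) :
    ∀ r : ℝ≥0∞, r < 1 →
      Tendsto (fun n => logGenFun P X n (fun j => r * l j)) atTop (nhds 0) := by
  intro r hr
  rcases eq_or_ne r 0 with rfl | hr0
  · -- trivial case r = 0
    have hz : (fun n => logGenFun P X n (fun j => 0 * l j)) = fun _ => (0 : Fin d → ℝ≥0∞) := by
      funext n k
      haveI := hprob k
      simp only [logGenFun, genFun, zero_mul, eexp_zero', one_pow, Finset.prod_const_one,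
        lintegral_one, measure_univ]
      simp [elog]
    rw [hz]
    exact tendsto_const_nhds
  have hrtop : r ≠ ⊤ := ne_top_of_lt hr
  set r' := r.toReal with hr'def
  have hr'pos : 0 < r' := ENNReal.toReal_pos hr0 hrtop
  have hr'lt : r' < 1 := by
    have := (ENNReal.toReal_lt_toReal hrtop ENNReal.one_ne_top).mpr hr
    simpa using this
  rw [tendsto_pi_nhds]
  intro k
  haveI := hprob k
  -- notation
  have hrwlg : ∀ n, logGenFun P X n (fun j => r * l j) k
      = elog (∫⁻ ω, ∏ j, eexp (r * l j) ^ X n ω j ∂ P k) := fun n => rfl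
  simp only [hrwlg, Pi.zero_apply]
  -- abbreviations as plain functions
  set Z : ℕ → Ω → ℝ≥0∞ := fun n ω => ∏ j, eexp (r * l j) ^ X n ω j with hZdef
  set W : ℕ → Ω → ℝ≥0∞ := fun n ω => ∏ j, eexp (l j) ^ X n ω j with hWdef
  have hZW : ∀ n ω, Z n ω = W n ω ^ r' := by
    intro n ω
    rw [hZdef, hWdef, ← ENNReal.prod_rpow_of_nonneg hr'pos.le]
    refine Finset.prod_congr rfl fun j _ => ?_
    rw [eexp_mul_eq_rpow r (l j) hrtop (hlfin j),
      ← ENNReal.rpow_natCast (eexp (l j) ^ r') (X n ω j),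
      ← ENNReal.rpow_natCast (eexp (l j)) (X n ω j),
      ← ENNReal.rpow_mul, ← ENNReal.rpow_mul, mul_comm]
  have hZmeas : ∀ n, Measurable (Z n) := fun n =>
    Finset.measurable_prod _ fun j _ =>
      (measurable_from_nat (f := fun m : ℕ => eexp (r * l j) ^ m)).comp
        ((measurable_pi_apply j).comp (hmeas n))
  have hZ1 : ∀ n ω, 1 ≤ Z n ω := fun n ω =>
    Finset.one_le_prod' fun j _ => one_le_pow_of_one_le' (one_le_eexp _) _
  have hW1 : ∀ n ω, 1 ≤ W n ω := fun n ω =>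
    Finset.one_le_prod' fun j _ => one_le_pow_of_one_le' (one_le_eexp _) _
  have hI1 : ∀ n, 1 ≤ ∫⁻ ω, Z n ω ∂ P k := by
    intro n
    calc (1 : ℝ≥0∞) = ∫⁻ _, 1 ∂ P k := by simp
      _ ≤ ∫⁻ ω, Z n ω ∂ P k := lintegral_mono (hZ1 n)
  -- measurability of zero sets
  have hSmeas : ∀ n, MeasurableSet {ω | X n ω = 0} := by
    intro n
    have : {ω | X n ω = 0} = ⋂ j, {ω | X n ω j = 0} := by
      ext ω; simp [funext_iff]
    rw [this]
    exact MeasurableSet.iInter fun j =>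
      ((measurable_pi_apply j).comp (hmeas n)) (measurableSet_singleton 0)
  -- extinction gives vanishing probabilities
  set B : ℕ → Set Ω := fun n => ⋂ m, ⋂ (_ : n ≤ m), {ω | X m ω = 0} with hBdef
  have hBmeas : ∀ n, MeasurableSet (B n) := fun n =>
    MeasurableSet.iInter fun m => MeasurableSet.iInter fun _ => hSmeas m
  have hBmono : Monotone B := by
    intro a b hab ω hω
    simp only [hBdef, mem_iInter, mem_setOf_eq] at hω ⊢
    exact fun m hm => hω m (hab.trans hm)
  have hBU : ⋃ n, B n = ExtinctionEvent X := by
    ext ω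
    simp [hBdef, ExtinctionEvent, mem_iUnion, mem_iInter]
  have hδ : Tendsto (fun n => P k (B n)ᶜ) atTop (nhds 0) := by
    have h1 : Tendsto (fun n => P k (B n)ᶜ) atTop (nhds (P k (⋂ n, (B n)ᶜ))) :=
      tendsto_measure_iInter_atTop (fun n => (hBmeas n).compl.nullMeasurableSet)
        (fun a b hab => compl_subset_compl.mpr (hBmono hab)) ⟨0, measure_ne_top _ _⟩
    have hmExt : MeasurableSet (ExtinctionEvent X) := hBU ▸ MeasurableSet.iUnion hBmeas
    have h2 : P k (⋂ n, (B n)ᶜ) = 0 := by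
      rw [← compl_iUnion, hBU, prob_compl_eq_zero_iff hmExt]
      exact hext k
    rwa [h2] at h1
  have hBS : ∀ n, B n ⊆ {ω | X n ω = 0} := by
    intro n ω hω
    simp only [hBdef, mem_iInter, mem_setOf_eq] at hω
    exact hω n le_rfl
  -- eventual bound on ∫ W
  have hLC : limsup (fun n => ∑ k', logGenFun P X n l k') atTop
      < limsup (fun n => ∑ k', logGenFun P X n l k') atTop + 1 :=
    ENNReal.lt_add_right hbdd one_ne_zero
  set C := limsup (fun n => ∑ k', logGenFun P X n l k') atTop + 1 with hCdef
  have hCne : C ≠ ⊤ := ENNReal.add_ne_top.mpr ⟨hbdd, ENNReal.one_ne_top⟩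
  have hev : ∀ᶠ n in atTop, ∑ k', logGenFun P X n l k' < C :=
    eventually_lt_of_limsup_lt hLC
  set M := ENNReal.ofReal (Real.exp C.toReal) with hMdef
  have hMne : M ≠ ⊤ := ENNReal.ofReal_ne_top
  have hWM : ∀ᶠ n in atTop, ∫⁻ ω, W n ω ∂ P k ≤ M := by
    filter_upwards [hev] with n hn
    have hgy : logGenFun P X n l k = elog (∫⁻ ω, W n ω ∂ P k) := rfl
    have hgC : logGenFun P X n l k < C :=
      lt_of_le_of_lt (Finset.single_le_sum (f := fun k' => logGenFun P X n l k')
        (fun _ _ => zero_le) (Finset.mem_univ k)) hn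
    rw [hgy] at hgC
    have hyt : (∫⁻ ω, W n ω ∂ P k) ≠ ⊤ := by
      intro h
      rw [h] at hgC
      simp [elog] at hgC
    have hy1 : 1 ≤ ∫⁻ ω, W n ω ∂ P k := by
      calc (1 : ℝ≥0∞) = ∫⁻ _, 1 ∂ P k := by simp
        _ ≤ ∫⁻ ω, W n ω ∂ P k := lintegral_mono (hW1 n)
    have hy0 : (0 : ℝ) < (∫⁻ ω, W n ω ∂ P k).toReal :=
      ENNReal.toReal_pos (by intro h; rw [h] at hy1; simp at hy1) hyt
    have hlogC : Real.log (∫⁻ ω, W n ω ∂ P k).toReal ≤ C.toReal := by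
      rw [elog, if_neg hyt] at hgC
      exact (ENNReal.ofReal_le_iff_le_toReal hCne).mp hgC.le
    have hexp : (∫⁻ ω, W n ω ∂ P k).toReal ≤ Real.exp C.toReal := by
      calc (∫⁻ ω, W n ω ∂ P k).toReal
          = Real.exp (Real.log (∫⁻ ω, W n ω ∂ P k).toReal) := (Real.exp_log hy0).symm
        _ ≤ Real.exp C.toReal := Real.exp_le_exp.mpr hlogC
    calc ∫⁻ ω, W n ω ∂ P k = ENNReal.ofReal (∫⁻ ω, W n ω ∂ P k).toReal :=
          (ENNReal.ofReal_toReal hyt).symm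
      _ ≤ M := ENNReal.ofReal_le_ofReal hexp
  -- Hölder step
  have hhold : ∀ n, ∫⁻ ω, Z n ω ∂ P k ≤
      P k {ω | X n ω = 0} + (∫⁻ ω, W n ω ∂ P k) ^ r'
        * (P k {ω | X n ω = 0}ᶜ) ^ (1 - r') := by
    intro n
    set S := {ω | X n ω = 0} with hSdef
    set g : Ω → ℝ≥0∞ := Sᶜ.indicator 1 with hgdef
    have hgmeas : Measurable g := measurable_one.indicator (hSmeas n).compl
    have hpq : Real.HolderConjugate (1 / r') (1 / (1 - r')) := by
      constructor
      · rw [one_div, one_div, inv_inv, inv_inv]; ring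
      · exact one_div_pos.mpr hr'pos
      · exact one_div_pos.mpr (by linarith)
    have key := ENNReal.lintegral_mul_le_Lp_mul_Lq (P k) hpq
      (hZmeas n).aemeasurable hgmeas.aemeasurable
    simp only [Pi.mul_apply] at key
    have e1 : ∫⁻ ω, Z n ω ^ (1 / r') ∂ P k = ∫⁻ ω, W n ω ∂ P k :=
      lintegral_congr fun ω => by
        rw [hZW, ← ENNReal.rpow_mul, mul_one_div_cancel hr'pos.ne', ENNReal.rpow_one]
    have e2 : ∫⁻ ω, g ω ^ (1 / (1 - r')) ∂ P k = P k Sᶜ := by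
      have hpt : ∀ ω, g ω ^ (1 / (1 - r')) = g ω := by
        intro ω
        by_cases hω : ω ∈ Sᶜ
        · rw [hgdef, indicator_of_mem hω]; simp
        · rw [hgdef, indicator_of_notMem hω,
            ENNReal.zero_rpow_of_pos (div_pos one_pos (by linarith))]
      rw [lintegral_congr hpt, hgdef, lintegral_indicator_one (hSmeas n).compl]
    rw [e1, e2, one_div_one_div, one_div_one_div] at key
    have hpt2 : ∀ ω, Z n ω ≤ S.indicator 1 ω + Z n ω * g ω := by
      intro ω
      by_cases hω : ω ∈ S
      · have hz1 : Z n ω = 1 := by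
          have h0 : X n ω = 0 := hω
          simp [hZdef, h0]
        rw [hz1, indicator_of_mem hω, Pi.one_apply]
        exact le_add_right le_rfl
      · rw [indicator_of_notMem hω, hgdef, indicator_of_mem (mem_compl hω), Pi.one_apply,
          mul_one, zero_add]
    calc ∫⁻ ω, Z n ω ∂ P k ≤ ∫⁻ ω, S.indicator 1 ω + Z n ω * g ω ∂ P k :=
          lintegral_mono hpt2
      _ = P k S + ∫⁻ ω, Z n ω * g ω ∂ P k := by
          rw [lintegral_add_left (measurable_one.indicator (hSmeas n)),
            lintegral_indicator_one (hSmeas n)]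
      _ ≤ P k S + (∫⁻ ω, W n ω ∂ P k) ^ r' * (P k Sᶜ) ^ (1 - r') :=
          add_le_add_right key _
  -- upper bound, eventually
  have hup : ∀ᶠ n in atTop, (∫⁻ ω, Z n ω ∂ P k)
      ≤ 1 + M ^ r' * (P k (B n)ᶜ) ^ (1 - r') := by
    filter_upwards [hWM] with n hWn
    refine (hhold n).trans ?_
    refine add_le_add prob_le_one (mul_le_mul' (ENNReal.rpow_le_rpow hWn hr'pos.le)
      (ENNReal.rpow_le_rpow (measure_mono (compl_subset_compl.mpr (hBS n))) (by linarith)))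
  -- limit of the upper bound
  have hup' : Tendsto (fun n => 1 + M ^ r' * (P k (B n)ᶜ) ^ (1 - r')) atTop (nhds 1) := by
    have hpow0 : Tendsto (fun n => (P k (B n)ᶜ) ^ (1 - r')) atTop (nhds 0) :=
      tendsto_rpow_zero_aux (by linarith) hδ
    have h1 : Tendsto (fun n => M ^ r' * (P k (B n)ᶜ) ^ (1 - r')) atTop (nhds 0) := by
      have := ENNReal.Tendsto.const_mul hpow0
        (Or.inr (ENNReal.rpow_ne_top_of_nonneg hr'pos.le hMne))
      simpa using this
    have := Tendsto.const_add (1 : ℝ≥0∞) h1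
    simpa using this
  have hI : Tendsto (fun n => ∫⁻ ω, Z n ω ∂ P k) atTop (nhds 1) :=
    tendsto_of_tendsto_of_tendsto_of_le_of_le' tendsto_const_nhds hup'
      (Eventually.of_forall hI1) hup
  exact tendsto_elog_of_tendsto_one hI
end

section
/- In the setting of a subcritical, positive regular, non-singular d-type branching process with continuous generating function and a.s. extinction: (i) if λ ∈ [0,∞)^d \ {0} with limsup_n |g^{(n)}(λ)| < ∞ and η ∈ [0,∞)^d with η < λ componentwise (at least one strict), then lim_n |g^{(n)}(η)| = 0; (ii) if limsup_n |g^{(n)}(λ)| > 0 and η > λ, then limsup_n |g^{(n)}(η)| = ∞. -/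
open MeasureTheory ProbabilityTheory ENNReal Filter Set

lemma eexp_ne_top {x : ℝ≥0∞} (hx : x ≠ ⊤) : eexp x ≠ ⊤ := by
  unfold eexp; rw [if_neg hx]; exact ENNReal.ofReal_ne_top

lemma elog_eexp (x : ℝ≥0∞) : elog (eexp x) = x := by
  rcases eq_or_ne x ⊤ with rfl | hx
  · simp [eexp, elog]
  · unfold eexp elog
    rw [if_neg hx, if_neg ENNReal.ofReal_ne_top,
      ENNReal.toReal_ofReal (Real.exp_pos _).le, Real.log_exp,
      ENNReal.ofReal_toReal hx]

lemma eexp_elog {z : ℝ≥0∞} (hz : 1 ≤ z) : eexp (elog z) = z := by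
  rcases eq_or_ne z ⊤ with rfl | hzt
  · simp [eexp, elog]
  · have hz1 : (1:ℝ) ≤ z.toReal := by
      rw [show (1:ℝ) = (1:ℝ≥0∞).toReal by simp]
      exact ENNReal.toReal_mono hzt hz
    unfold elog eexp
    rw [if_neg hzt, if_neg ENNReal.ofReal_ne_top,
      ENNReal.toReal_ofReal (Real.log_nonneg hz1), Real.exp_log (by linarith),
      ENNReal.ofReal_toReal hzt]

lemma eexp_mono {x y : ℝ≥0∞} (h : x ≤ y) : eexp x ≤ eexp y := by
  rcases eq_or_ne y ⊤ with rfl | hy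
  · simp [eexp]
  · have hx : x ≠ ⊤ := fun hh => hy (top_le_iff.mp (hh ▸ h))
    unfold eexp
    rw [if_neg hx, if_neg hy]
    exact ENNReal.ofReal_le_ofReal (Real.exp_le_exp.mpr (ENNReal.toReal_mono hy h))

lemma eexp_lt_eexp {x y : ℝ≥0∞} (h : x < y) (hx : x ≠ ⊤) : eexp x < eexp y := by
  rcases eq_or_ne y ⊤ with rfl | hy
  · have h1 : eexp x ≠ ⊤ := eexp_ne_top hx
    have h2 : eexp ⊤ = ⊤ := by simp [eexp]
    rw [h2]
    exact lt_top_iff_ne_top.mpr h1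
  · unfold eexp
    rw [if_neg hx, if_neg hy]
    exact ENNReal.ofReal_lt_ofReal_iff (Real.exp_pos _) |>.mpr
      (Real.exp_lt_exp.mpr (ENNReal.toReal_strict_mono hy h))

lemma le_eexp_of_elog_le {z C : ℝ≥0∞} (hz : 1 ≤ z) (h : elog z ≤ C) : z ≤ eexp C := by
  calc z = eexp (elog z) := (eexp_elog hz).symm
  _ ≤ eexp C := eexp_mono h


section helpers

variable {d : ℕ} {Ω : Type*} [MeasurableSpace Ω]
    (P : Fin d → Measure Ω) (X : ℕ → Ω → Fin d → ℕ)

lemma one_le_genFun (hprob : ∀ k, IsProbabilityMeasure (P k))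
    {q : Fin d → ℝ≥0∞} (hq : ∀ j, 1 ≤ q j) (n : ℕ) (k : Fin d) :
    1 ≤ genFun P X n q k := by
  have := hprob k
  calc (1:ℝ≥0∞) = ∫⁻ _, 1 ∂(P k) := by simp
  _ ≤ genFun P X n q k := by
      refine lintegral_mono fun ω => ?_
      exact Finset.one_le_prod' fun j _ => one_le_pow_of_one_le' (hq j) _

lemma measurable_prodPow (hmeas : ∀ n, Measurable (X n)) (u : Fin d → ℝ≥0∞) (n : ℕ) :
    Measurable fun ω => ∏ j, (u j) ^ (X n ω j) := by
  refine Finset.measurable_prod _ fun j _ => ?_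
  have h1 : Measurable fun ω => X n ω j := (measurable_pi_apply j).comp (hmeas n)
  exact (measurable_from_top (f := fun m : ℕ => (u j) ^ m)).comp h1

lemma logGenFun_iterate (hprob : ∀ k, IsProbabilityMeasure (P k))
    (hiter : ∀ n q, (genFun P X 1)^[n] q = genFun P X n q)
    (l : Fin d → ℝ≥0∞) (n : ℕ) :
    (logGenFun P X 1)^[n] l = fun k => elog (genFun P X n (fun j => eexp (l j)) k) := by
  induction n with
  | zero =>
    simp only [Function.iterate_zero, id_eq, ← hiter 0 (fun j => eexp (l j)),
      Function.iterate_zero, id_eq]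
    funext k; rw [elog_eexp]
  | succ n ih =>
    rw [Function.iterate_succ_apply', ih]
    funext k
    show elog (genFun P X 1 (fun j => eexp (elog (genFun P X n (fun j => eexp (l j)) j))) k) = _
    have h1 : ∀ j, eexp (elog (genFun P X n (fun j => eexp (l j)) j))
        = genFun P X n (fun j => eexp (l j)) j := fun j =>
      eexp_elog (one_le_genFun P X hprob (fun j => one_le_eexp _) n j)
    have h2 : genFun P X (n+1) (fun j => eexp (l j))
        = genFun P X 1 (genFun P X n (fun j => eexp (l j))) := by
      rw [← hiter (n+1), Function.iterate_succ_apply', hiter n]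
    rw [h2]
    congr 1
    congr 1
    funext j
    exact h1 j

end helpers

section gap

variable {d : ℕ} {Ω : Type*} [MeasurableSpace Ω]
    (P : Fin d → Measure Ω) (X : ℕ → Ω → Fin d → ℕ)

lemma genFun_gap (hmeas : ∀ n, Measurable (X n))
    {q r : Fin d → ℝ≥0∞} (hq1 : ∀ j, 1 ≤ q j) (hqr : ∀ j, q j ≤ r j)
    {j0 : Fin d} (hrt : r j0 ≠ ⊤) (N : ℕ) (k : Fin d) :
    genFun P X N q k + (1 - q j0 / r j0) * (P k) {ω | 1 ≤ X N ω j0}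
      ≤ genFun P X N r k := by
  set c : ℝ≥0∞ := q j0 / r j0 with hc
  have hr0 : r j0 ≠ 0 := fun h => by
    have h1 := (hq1 j0).trans (hqr j0)
    rw [h] at h1; simp at h1
  have hcr : c * r j0 = q j0 := ENNReal.div_mul_cancel hr0 hrt
  set S : Set Ω := {ω | 1 ≤ X N ω j0} with hS
  have hSm : MeasurableSet S := by
    have h1 : Measurable fun ω => X N ω j0 := (measurable_pi_apply j0).comp (hmeas N)
    exact h1 (by trivial)
  have hr1 : ∀ j, 1 ≤ r j := fun j => (hq1 j).trans (hqr j)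
  have key : ∀ ω, (∏ j, (q j) ^ (X N ω j)) + (1 - c) * S.indicator (fun _ => 1) ω
      ≤ ∏ j, (r j) ^ (X N ω j) := by
    intro ω
    by_cases hω : ω ∈ S
    · rw [Set.indicator_of_mem hω, mul_one]
      have hWcR : (∏ j, (q j) ^ (X N ω j)) ≤ c * ∏ j, (r j) ^ (X N ω j) := by
        rw [← Finset.mul_prod_erase Finset.univ _ (Finset.mem_univ j0),
          ← Finset.mul_prod_erase Finset.univ (fun j => (r j) ^ (X N ω j)) (Finset.mem_univ j0),
          ← mul_assoc]
        refine mul_le_mul' ?_ (Finset.prod_le_prod' fun j _ => pow_le_pow_left' (hqr j) _)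
        obtain ⟨s, hs⟩ := Nat.exists_eq_add_of_le (hω : 1 ≤ X N ω j0)
        rw [hs, pow_add, pow_add, pow_one, pow_one]
        calc q j0 * q j0 ^ s = (c * r j0) * q j0 ^ s := by rw [hcr]
          _ ≤ (c * r j0) * r j0 ^ s := mul_le_mul' le_rfl (pow_le_pow_left' (hqr j0) s)
          _ = c * (r j0 * r j0 ^ s) := by ring
      have hR1 : (1:ℝ≥0∞) ≤ ∏ j, (r j) ^ (X N ω j) :=
        Finset.one_le_prod' fun j _ => one_le_pow_of_one_le' (hr1 j) _
      have hc1 : c ≤ 1 := by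
        rw [hc, ENNReal.div_le_iff hr0 hrt, one_mul]; exact hqr j0
      calc (∏ j, (q j) ^ (X N ω j)) + (1 - c)
          ≤ c * (∏ j, (r j) ^ (X N ω j)) + (1 - c) * (∏ j, (r j) ^ (X N ω j)) :=
            add_le_add hWcR (le_mul_of_one_le_right' hR1)
        _ = (c + (1 - c)) * (∏ j, (r j) ^ (X N ω j)) := by rw [add_mul]
        _ = ∏ j, (r j) ^ (X N ω j) := by
            rw [add_tsub_cancel_of_le hc1, one_mul]
    · rw [Set.indicator_of_notMem hω, mul_zero, add_zero]
      exact Finset.prod_le_prod' fun j _ => pow_le_pow_left' (hqr j) _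
  calc genFun P X N q k + (1 - c) * (P k) S
      = ∫⁻ ω, (∏ j, (q j) ^ (X N ω j)) + (1 - c) * S.indicator (fun _ => 1) ω ∂(P k) := by
        rw [lintegral_add_left (measurable_prodPow X hmeas q N),
          lintegral_const_mul _ ((measurable_const (a := (1:ℝ≥0∞))).indicator hSm),
          lintegral_indicator_const hSm, one_mul]
        rfl
    _ ≤ genFun P X N r k := lintegral_mono key

end gap

section top

variable {d : ℕ} {Ω : Type*} [MeasurableSpace Ω]
    (P : Fin d → Measure Ω) (X : ℕ → Ω → Fin d → ℕ)

lemma genFun_top (hmeas : ∀ n, Measurable (X n)) {N : ℕ} {u : Fin d → ℝ≥0∞} (hu1 : ∀ j, 1 ≤ u j)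
    {j1 : Fin d} (huj : u j1 = ⊤) {k : Fin d}
    (hpos : 0 < P k {ω | 1 ≤ X N ω j1}) :
    genFun P X N u k = ⊤ := by
  refine top_le_iff.mp ?_
  set S : Set Ω := {ω | 1 ≤ X N ω j1} with hS
  calc (⊤:ℝ≥0∞) = ⊤ * P k S := (ENNReal.top_mul hpos.ne').symm
    _ = ∫⁻ ω, S.indicator (fun _ => (⊤:ℝ≥0∞)) ω ∂(P k) := by
        have hSm : MeasurableSet S := by
          have h1 : Measurable fun ω => X N ω j1 := (measurable_pi_apply j1).comp (hmeas N)
          exact h1 (by trivial)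
        rw [lintegral_indicator_const hSm]
    _ ≤ genFun P X N u k := by
        refine lintegral_mono fun ω => ?_
        by_cases hω : ω ∈ S
        · rw [Set.indicator_of_mem hω]
          have h1 : u j1 ^ (X N ω j1) ≤ ∏ j, (u j) ^ (X N ω j) :=
            Finset.single_le_prod' (fun j _ => one_le_pow_of_one_le' (hu1 j) _)
              (Finset.mem_univ j1)
          have hx : 0 < X N ω j1 := hω
          have h2 : u j1 ^ (X N ω j1) = ⊤ := by
            rw [huj]; exact ENNReal.top_pow hx.ne'
          rw [← h2]; exact h1
        · rw [Set.indicator_of_notMem hω]; exact zero_le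

lemma genFun_add (hiter : ∀ n q, (genFun P X 1)^[n] q = genFun P X n q)
    (a b : ℕ) (w : Fin d → ℝ≥0∞) :
    genFun P X (a + b) w = genFun P X a (genFun P X b w) := by
  rw [← hiter (a+b), ← hiter a, ← hiter b, Function.iterate_add_apply]

end top

section main

variable {d : ℕ} {Ω : Type*} [MeasurableSpace Ω]
    (P : Fin d → Measure Ω) (X : ℕ → Ω → Fin d → ℕ)

lemma main_tendsto
    (hprob : ∀ k, IsProbabilityMeasure (P k))
    (hmeas : ∀ n, Measurable (X n))
    (hiter : ∀ n q, (genFun P X 1)^[n] q = genFun P X n q)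
    (hPR : ∃ N, ∀ k j, 0 < P k {ω | 1 ≤ X N ω j})
    (hext : ∀ k, P k (ExtinctionEvent X) = 1)
    {l η : Fin d → ℝ≥0∞} (hl : ∀ j, l j ≠ ⊤)
    (hlim : limsup (fun n => ∑ k, (logGenFun P X 1)^[n] l k) atTop ≠ ⊤)
    (hη : ∀ j, η j ≠ ⊤) (hlt : η < l) :
    Tendsto (fun n => (logGenFun P X 1)^[n] η) atTop (nhds 0) := by
  obtain ⟨N, hPRN⟩ := hPR
  set q : Fin d → ℝ≥0∞ := fun j => eexp (η j) with hqdef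
  set r : Fin d → ℝ≥0∞ := fun j => eexp (l j) with hrdef
  obtain ⟨hle, j0, hj0⟩ := Pi.lt_def.mp hlt
  have hq1 : ∀ j, 1 ≤ q j := fun j => one_le_eexp _
  have hr1 : ∀ j, 1 ≤ r j := fun j => one_le_eexp _
  have hqr : ∀ j, q j ≤ r j := fun j => eexp_mono (hle j)
  have hqj0 : q j0 < r j0 := eexp_lt_eexp hj0 (hη j0)
  have hrfin : ∀ j, r j ≠ ⊤ := fun j => eexp_ne_top (hl j)
  have hqfin : ∀ j, q j ≠ ⊤ := fun j => eexp_ne_top (hη j)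
  -- eventual bound on genFun n r
  have hLC : limsup (fun n => ∑ k, (logGenFun P X 1)^[n] l k) atTop
      < limsup (fun n => ∑ k, (logGenFun P X 1)^[n] l k) atTop + 1 :=
    ENNReal.lt_add_right hlim one_ne_zero
  set C : ℝ≥0∞ := limsup (fun n => ∑ k, (logGenFun P X 1)^[n] l k) atTop + 1 with hCdef
  have hC : C ≠ ⊤ := by
    rw [hCdef]
    exact ENNReal.add_ne_top.mpr ⟨hlim, ENNReal.one_ne_top⟩
  obtain ⟨M, hM⟩ := eventually_atTop.mp (eventually_lt_of_limsup_lt hLC)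
  set B : ℝ≥0∞ := eexp C with hBdef
  have hB : B ≠ ⊤ := eexp_ne_top hC
  have hFr : ∀ n, M ≤ n → ∀ k, genFun P X n r k ≤ B := by
    intro n hn k
    have h1 : (logGenFun P X 1)^[n] l k ≤ C := by
      refine le_of_lt (lt_of_le_of_lt ?_ (hM n hn))
      exact Finset.single_le_sum (f := fun k => (logGenFun P X 1)^[n] l k)
        (fun _ _ => zero_le) (Finset.mem_univ k)
    have h2 := congrFun (logGenFun_iterate P X hprob hiter l n) k
    rw [h2] at h1
    exact le_eexp_of_elog_le (one_le_genFun P X hprob (fun j => one_le_eexp _) n k) h1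
  -- finiteness of v
  set u : Fin d → ℝ≥0∞ := genFun P X N q with hudef
  set v : Fin d → ℝ≥0∞ := genFun P X N r with hvdef
  have hv1 : ∀ j, 1 ≤ v j := fun j => one_le_genFun P X hprob hr1 N j
  have hu1 : ∀ j, 1 ≤ u j := fun j => one_le_genFun P X hprob hq1 N j
  have hvfin : ∀ j, v j ≠ ⊤ := by
    by_contra h
    push_neg at h
    obtain ⟨j1, hj1⟩ := h
    rcases Nat.eq_zero_or_pos N with hN0 | hNpos
    · have hj1' : r j1 = ⊤ := by
        have h0 : genFun P X N r j1 = r j1 := by rw [hN0, ← hiter 0 r]; simp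
        rw [← h0]; exact hj1
      exact hrfin j1 hj1'
    · have htop : ∀ t k, genFun P X ((2+t)*N) r k = ⊤ := by
        intro t
        induction t with
        | zero =>
          intro k
          have h2N : (2+0)*N = N + N := by ring
          rw [h2N, genFun_add P X hiter N N r]
          exact genFun_top P X hmeas hv1 hj1 (hPRN k j1)
        | succ t ih =>
          intro k
          have hsp : (2+(t+1))*N = N + (2+t)*N := by ring
          rw [hsp, genFun_add P X hiter]
          exact genFun_top P X hmeas
            (fun j => one_le_genFun P X hprob hr1 _ j) (ih j0) (hPRN k j0)
      have hge : M ≤ (2 + M) * N := by nlinarith [hNpos]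
      have hcon := hFr ((2+M)*N) hge j0
      rw [htop M j0] at hcon
      exact hB (top_le_iff.mp hcon)
  -- strictness
  have hr0 : r j0 ≠ 0 := (zero_lt_one.trans_le (hr1 j0)).ne'
  have huv : ∀ j, u j < v j := by
    intro j
    have hgap := genFun_gap P X hmeas hq1 hqr (hrfin j0) N j
    have hc1 : q j0 / r j0 < 1 := by
      rw [ENNReal.div_lt_iff (Or.inl hr0) (Or.inl (hrfin j0)), one_mul]
      exact hqj0
    have hpos : (1 - q j0 / r j0) * P j {ω | 1 ≤ X N ω j0} ≠ 0 :=
      (ENNReal.mul_pos (tsub_pos_of_lt hc1).ne' (hPRN j j0).ne').ne'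
    have hne : u j ≠ ⊤ := ne_top_of_le_ne_top (hvfin j) (le_trans le_self_add hgap)
    exact lt_of_lt_of_le (ENNReal.lt_add_right hne hpos) hgap
  -- theta
  have hufin : ∀ j, u j ≠ ⊤ := fun j => ((huv j).trans (hvfin j).lt_top).ne
  -- theta construction
  set a : Fin d → ℝ := fun j => (u j).toReal with hadef
  set b : Fin d → ℝ := fun j => (v j).toReal with hbdef
  have ha1 : ∀ j, 1 ≤ a j := fun j => by
    have h := ENNReal.toReal_mono (hufin j) (hu1 j)
    simpa using h
  have hab : ∀ j, a j < b j := fun j => ENNReal.toReal_strict_mono (hvfin j) (huv j)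
  have hb1 : ∀ j, 1 < b j := fun j => lt_of_le_of_lt (ha1 j) (hab j)
  have hbpos : ∀ j, 0 < Real.log (b j) := fun j => Real.log_pos (hb1 j)
  have hnonempty : (Finset.univ : Finset (Fin d)).Nonempty := ⟨j0, Finset.mem_univ j0⟩
  set θ' : ℝ := max (Finset.univ.sup' hnonempty fun j => Real.log (a j) / Real.log (b j))
    (1/2) with hθdef
  have hθpos : 0 < θ' := lt_of_lt_of_le (by norm_num) (le_max_right _ _)
  have hθlt1 : θ' < 1 := by
    apply max_lt _ (by norm_num)
    rw [Finset.sup'_lt_iff]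
    intro j _
    rw [div_lt_one (hbpos j)]
    exact Real.log_lt_log (by linarith [ha1 j]) (hab j)
  have hθle : ∀ j, Real.log (a j) ≤ θ' * Real.log (b j) := by
    intro j
    have h1 : Real.log (a j) / Real.log (b j) ≤ θ' :=
      le_trans (Finset.le_sup' (f := fun j => Real.log (a j) / Real.log (b j)) (Finset.mem_univ j)) (le_max_left _ _)
    calc Real.log (a j) = (Real.log (a j) / Real.log (b j)) * Real.log (b j) :=
          (div_mul_cancel₀ _ (hbpos j).ne').symm
      _ ≤ θ' * Real.log (b j) := mul_le_mul_of_nonneg_right h1 (hbpos j).le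
  have huvθ : ∀ j, u j ≤ (v j) ^ θ' := by
    intro j
    have hreal : a j ≤ (b j) ^ θ' := by
      rw [Real.rpow_def_of_pos (by linarith [hb1 j])]
      calc a j = Real.exp (Real.log (a j)) := (Real.exp_log (by linarith [ha1 j])).symm
        _ ≤ Real.exp (Real.log (b j) * θ') := Real.exp_le_exp.mpr (by nlinarith [hθle j])
    rw [← ENNReal.ofReal_toReal (hufin j),
      ← ENNReal.ofReal_toReal (ENNReal.rpow_ne_top_of_nonneg hθpos.le (hvfin j))]
    apply ENNReal.ofReal_le_ofReal
    rw [← ENNReal.toReal_rpow]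
    exact hreal
  have hprodle : ∀ n ω, (∏ j, (u j) ^ (X n ω j)) ≤ (∏ j, (v j) ^ (X n ω j)) ^ θ' := by
    intro n ω
    rw [← ENNReal.prod_rpow_of_nonneg hθpos.le]
    refine Finset.prod_le_prod' fun j _ => ?_
    calc u j ^ (X n ω j) ≤ (v j ^ θ') ^ (X n ω j) := pow_le_pow_left' (huvθ j) _
      _ = (v j ^ (X n ω j)) ^ θ' := by
          rw [← ENNReal.rpow_natCast (v j ^ θ'), ← ENNReal.rpow_natCast (v j),
            ← ENNReal.rpow_mul, ← ENNReal.rpow_mul, mul_comm]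
  -- extinction sets
  set Z : ℕ → Set Ω := fun n => {ω | X n ω = 0} with hZdef
  have hZmeas : ∀ n, MeasurableSet (Z n) := fun n => by
    have hZeq : Z n = (X n)⁻¹' {0} := rfl
    rw [hZeq]; exact (hmeas n) (measurableSet_singleton 0)
  set A : ℕ → Set Ω := fun m => ⋂ n, ⋂ (_ : m ≤ n), Z n with hAdef
  have hAmeas : ∀ m, MeasurableSet (A m) := fun m =>
    MeasurableSet.iInter fun n => MeasurableSet.iInter fun _ => hZmeas n
  have hAmono : Monotone A := by
    intro m m' hmm ω hω
    simp only [hAdef, Set.mem_iInter] at hω ⊢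
    intro n hn
    exact hω n (le_trans hmm hn)
  have hAsub : ∀ n, (Z n)ᶜ ⊆ (A n)ᶜ := by
    intro n
    refine Set.compl_subset_compl.mpr ?_
    intro ω hω
    simp only [hAdef, Set.mem_iInter] at hω
    exact hω n le_rfl
  have hExtEq : (ExtinctionEvent X) = ⋃ m, A m := by
    ext ω
    simp only [ExtinctionEvent, Set.mem_setOf_eq, Set.mem_iUnion, hAdef, Set.mem_iInter, hZdef]
  have hAtend : ∀ k, Tendsto (fun m => P k (A m)ᶜ) atTop (nhds 0) := by
    intro k
    have hprob' := hprob k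
    have h1 : Tendsto (fun m => P k (A m)ᶜ) atTop (nhds (P k (⋂ m, (A m)ᶜ))) :=
      tendsto_measure_iInter_atTop (μ := P k)
        (fun m => ((hAmeas m).compl).nullMeasurableSet)
        (fun m m' h => Set.compl_subset_compl.mpr (hAmono h)) ⟨0, measure_ne_top _ _⟩
    have h2 : P k (⋂ m, (A m)ᶜ) = 0 := by
      rw [← Set.compl_iUnion, measure_compl (MeasurableSet.iUnion hAmeas) (measure_ne_top _ _),
        measure_univ, ← hExtEq, hext k, tsub_self]
    rwa [h2] at h1
  -- main upper bound
  have upper : ∀ n, M ≤ n → ∀ k,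
      genFun P X (n + N) q k ≤ 1 + B ^ θ' * (P k (A n)ᶜ) ^ (1 - θ') := by
    intro n hn k
    have hPk := hprob k
    rw [genFun_add P X hiter n N q]
    show ∫⁻ ω, ∏ j, (u j) ^ (X n ω j) ∂(P k) ≤ _
    rw [← lintegral_add_compl (fun ω => ∏ j, (u j) ^ (X n ω j)) (hZmeas n)]
    refine add_le_add ?_ ?_
    · have h1 : ∫⁻ ω in Z n, ∏ j, (u j) ^ (X n ω j) ∂(P k) = ∫⁻ _ in Z n, 1 ∂(P k) := by
        refine setLIntegral_congr_fun (hZmeas n) (fun ω hω => ?_)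
        have hzero : ∀ j, X n ω j = 0 := fun j => congrFun hω j
        simp [hzero]
      rw [h1, setLIntegral_one]
      exact prob_le_one
    · set Y : Ω → ℝ≥0∞ := fun ω => ∏ j, (v j) ^ (X n ω j) with hY
      have hmY : Measurable Y := measurable_prodPow X hmeas v n
      have hmYθ : Measurable fun ω => (Y ω) ^ θ' :=
        (ENNReal.continuous_rpow_const.measurable).comp hmY
      have step1 : ∫⁻ ω in (Z n)ᶜ, ∏ j, (u j) ^ (X n ω j) ∂(P k)
          ≤ ∫⁻ ω, ((fun ω => (Y ω) ^ θ') * ((Z n)ᶜ).indicator fun _ => (1:ℝ≥0∞)) ω ∂(P k) := by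
        rw [← lintegral_indicator (hZmeas n).compl]
        refine lintegral_mono fun ω => ?_
        by_cases hω : ω ∈ (Z n)ᶜ
        · rw [Set.indicator_of_mem hω]
          simp only [Pi.mul_apply, Set.indicator_of_mem hω, mul_one]
          exact hprodle n ω
        · simp [Set.indicator_of_notMem hω]
      have hpq : Real.HolderConjugate (1/θ') (1/(1-θ')) := by
        rw [Real.holderConjugate_iff]
        constructor
        · exact one_lt_one_div hθpos hθlt1
        · rw [one_div, one_div, inv_inv, inv_inv]; ring
      have holder := ENNReal.lintegral_mul_le_Lp_mul_Lq (P k) hpq hmYθ.aemeasurable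
        ((measurable_one.indicator (hZmeas n).compl).aemeasurable)
      have hfp : ∀ ω, ((Y ω) ^ θ') ^ (1/θ') = Y ω := fun ω => by
        rw [← ENNReal.rpow_mul, mul_one_div_cancel hθpos.ne', ENNReal.rpow_one]
      have hgq : ∀ ω, (((Z n)ᶜ).indicator (fun _ => (1:ℝ≥0∞)) ω) ^ (1/(1-θ'))
          = ((Z n)ᶜ).indicator (fun _ => (1:ℝ≥0∞)) ω := fun ω => by
        by_cases hω : ω ∈ (Z n)ᶜ
        · rw [Set.indicator_of_mem hω, ENNReal.one_rpow]
        · rw [Set.indicator_of_notMem hω,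
            ENNReal.zero_rpow_of_pos (one_div_pos.mpr (by linarith))]
      calc ∫⁻ ω in (Z n)ᶜ, ∏ j, (u j) ^ (X n ω j) ∂(P k)
          ≤ ∫⁻ ω, ((fun ω => (Y ω) ^ θ') * ((Z n)ᶜ).indicator fun _ => (1:ℝ≥0∞)) ω ∂(P k) :=
            step1
        _ ≤ (∫⁻ ω, ((Y ω) ^ θ') ^ (1/θ') ∂(P k)) ^ (1/(1/θ'))
            * (∫⁻ ω, (((Z n)ᶜ).indicator (fun _ => (1:ℝ≥0∞)) ω) ^ (1/(1-θ')) ∂(P k))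
              ^ (1/(1/(1-θ'))) := holder
        _ = (∫⁻ ω, Y ω ∂(P k)) ^ θ' * (P k ((Z n)ᶜ)) ^ (1-θ') := by
            rw [one_div_one_div, one_div_one_div]
            congr 1
            · congr 1
              exact lintegral_congr hfp
            · congr 1
              rw [lintegral_congr hgq, lintegral_indicator_const (hZmeas n).compl, one_mul]
        _ ≤ B ^ θ' * (P k (A n)ᶜ) ^ (1-θ') := by
            refine mul_le_mul' ?_ ?_
            · refine ENNReal.rpow_le_rpow ?_ hθpos.le
              have hYint : ∫⁻ ω, Y ω ∂(P k) = genFun P X (n + N) r k := by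
                rw [genFun_add P X hiter n N r]; rfl
              rw [hYint]
              exact hFr (n + N) (le_trans hn (Nat.le_add_right n N)) k
            · exact ENNReal.rpow_le_rpow (measure_mono (hAsub n)) (by linarith)
  -- limit of genFun n q k
  have hone : ∀ k, Tendsto (fun n => genFun P X n q k) atTop (nhds 1) := by
    intro k
    have hupperlim : Tendsto (fun n => 1 + B ^ θ' * (P k (A n)ᶜ) ^ (1-θ')) atTop (nhds 1) := by
      have h1 : Tendsto (fun n => (P k (A n)ᶜ) ^ (1-θ')) atTop (nhds 0) := by
        have hc : Continuous fun x : ℝ≥0∞ => x ^ (1-θ') := ENNReal.continuous_rpow_const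
        have h := (hc.tendsto 0).comp (hAtend k)
        rwa [ENNReal.zero_rpow_of_pos (by linarith), Function.comp_def] at h
      have h2 : Tendsto (fun n => B ^ θ' * (P k (A n)ᶜ) ^ (1-θ')) atTop (nhds 0) := by
        have h := ENNReal.Tendsto.const_mul h1
          (Or.inr (ENNReal.rpow_ne_top_of_nonneg hθpos.le hB))
        rwa [mul_zero] at h
      have h3 := h2.const_add (1:ℝ≥0∞)
      rwa [add_zero] at h3
    have hshift : Tendsto (fun n => genFun P X (n + N) q k) atTop (nhds 1) := by
      refine tendsto_of_tendsto_of_tendsto_of_le_of_le' tendsto_const_nhds hupperlim ?_ ?_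
      · exact Filter.Eventually.of_forall fun n => one_le_genFun P X hprob hq1 _ k
      · exact eventually_atTop.mpr ⟨M, fun n hn => upper n hn k⟩
    exact (tendsto_add_atTop_iff_nat N).mp hshift
  -- pass to elog
  have hel : ∀ k, Tendsto (fun n => elog (genFun P X n q k)) atTop (nhds 0) := by
    intro k
    have h1 : Tendsto (fun n => (genFun P X n q k).toReal) atTop (nhds 1) := by
      have h := (ENNReal.tendsto_toReal ENNReal.one_ne_top).comp (hone k)
      simpa [Function.comp_def] using h
    have h2 : Tendsto (fun n => ENNReal.ofReal (Real.log (genFun P X n q k).toReal))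
        atTop (nhds 0) := by
      have hlog := ((Real.continuousAt_log one_ne_zero).tendsto).comp h1
      rw [Real.log_one] at hlog
      have h := (ENNReal.continuous_ofReal.tendsto 0).comp hlog
      simpa [Function.comp_def] using h
    refine h2.congr' ?_
    have hev : ∀ᶠ n in atTop, genFun P X n q k ≠ ⊤ := by
      have h := (hone k).eventually (gt_mem_nhds (by norm_num : (1:ℝ≥0∞) < 2))
      exact h.mono fun n hn => (hn.trans (by norm_num)).ne
    filter_upwards [hev] with n hn
    rw [elog, if_neg hn]
  -- conclude
  rw [tendsto_pi_nhds]
  intro k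
  have heq : ∀ n, (logGenFun P X 1)^[n] η k = elog (genFun P X n q k) := fun n =>
    congrFun (logGenFun_iterate P X hprob hiter η n) k
  have h := hel k
  simp only [← heq] at h
  simpa using h

end main

/-- (Instability.) For a subcritical, positive regular, non-singular
`d`-type branching process with continuous generating function and a.s. extinction:
(i) if `λ ∈ [0,∞)^d \ {0}` with `limsup_n |g⁽ⁿ⁾(λ)| < ∞` and `η ∈ [0,∞)^d` with
`η < λ` (componentwise `≤`, at least one strict), then `lim_n |g⁽ⁿ⁾(η)| = 0`;
(ii) if `limsup_n |g⁽ⁿ⁾(λ)| > 0` and `η > λ`, then `limsup_n |g⁽ⁿ⁾(η)| = ∞`. -/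
theorem logGenFun_unstable
    {d : ℕ} {Ω : Type*} [MeasurableSpace Ω]
    (P : Fin d → Measure Ω) (X : ℕ → Ω → Fin d → ℕ)
    (hprob : ∀ k, IsProbabilityMeasure (P k))
    (hmeas : ∀ n, Measurable (X n))
    (hiter : ∀ n q, (genFun P X 1)^[n] q = genFun P X n q)
    (hsub : Subcritical P X)
    (hPR : PositiveRegular P X)
    (hNS : NonSingular P X)
    (hcont : GenFunContinuous P X)
    (hext : ∀ k, P k (ExtinctionEvent X) = 1) :
    (∀ l η : Fin d → ℝ≥0∞, (∀ j, l j ≠ ⊤) → l ≠ 0 →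
        limsup (fun n => ∑ k, (logGenFun P X 1)^[n] l k) atTop ≠ ⊤ →
        (∀ j, η j ≠ ⊤) → η < l →
        Tendsto (fun n => (logGenFun P X 1)^[n] η) atTop (nhds 0)) ∧
      (∀ l η : Fin d → ℝ≥0∞, (∀ j, l j ≠ ⊤) → l ≠ 0 →
        0 < limsup (fun n => ∑ k, (logGenFun P X 1)^[n] l k) atTop →
        (∀ j, η j ≠ ⊤) → l < η →
        limsup (fun n => ∑ k, (logGenFun P X 1)^[n] η k) atTop = ⊤) := by
  constructor
  · intro l η hl _hl0 hlim hη hlt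
    exact main_tendsto P X hprob hmeas hiter hPR hext hl hlim hη hlt
  · intro l η hl _hl0 hpos hη hlt
    by_contra hne
    have h := main_tendsto P X hprob hmeas hiter hPR hext hη hne hl hlt
    have hsum : Tendsto (fun n => ∑ k, (logGenFun P X 1)^[n] l k) atTop (nhds 0) := by
      have hcoord : ∀ k, Tendsto (fun n => (logGenFun P X 1)^[n] l k) atTop (nhds 0) := by
        intro k
        have hk := tendsto_pi_nhds.mp h k
        simpa using hk
      have hs := tendsto_finset_sum (Finset.univ : Finset (Fin d))
        (fun k _ => hcoord k)
      simpa using hs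
    rw [hsum.limsup_eq] at hpos
    exact lt_irrefl 0 hpos
end
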